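/- arXiv:0906.0874 — 4 statements merged into one kernel-verified Lean document; each statement's English description precedes it below -/
import Mathlib

section
/- Let φ be a c-convex function on S^n, differentiable at x and y. Then the gradient map G_φ satisfies the 2-monotonicity inequality d(x, G_φ(x))² + d(y, G_φ(y))² ≤ d(x, G_φ(y))² + d(y, G_φ(x))², with equality only if G_φ(x) = G_φ(y). -/
open Real Set

noncomputable section

/-- Ambient Euclidean space `ℝ^{n+1}`. -/
abbrev Amb (n : ℕ) := EuclideanSpace ℝ (Fin (n + 1))

/-- The unit sphere `S^n ⊂ ℝ^{n+1}`. -/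
def Sph (n : ℕ) : Set (Amb n) := Metric.sphere (0 : Amb n) 1

/-- Geodesic distance on the sphere. -/
noncomputable def sphDist {n : ℕ} (x y : Amb n) : ℝ := Real.arccos (inner ℝ x y : ℝ)

/-- The cost function `c(x,y) = d(x,y)²/2`. -/
noncomputable def cost {n : ℕ} (x y : Amb n) : ℝ := sphDist x y ^ 2 / 2

/-- The c-transform `φ^c(y) = sup_{x ∈ Sⁿ} {-c(x,y) - φ(x)}`. -/
noncomputable def cT {n : ℕ} (φ : Amb n → ℝ) (y : Amb n) : ℝ :=
  ⨆ x : (Sph n), (-(cost (x : Amb n) y) - φ x)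

/-- A function is c-convex if `(φ^c)^c = φ` on the sphere. -/
def CConvex {n : ℕ} (φ : Amb n → ℝ) : Prop := ∀ x ∈ Sph n, cT (cT φ) x = φ x

/-- Exponential map of the sphere at `x` applied to a tangent vector `v`. -/
noncomputable def sphExp {n : ℕ} (x v : Amb n) : Amb n :=
  Real.cos ‖v‖ • x + (Real.sin ‖v‖ / ‖v‖) • v

/-- Inverse exponential map `exp_x⁻¹(y)`. -/
noncomputable def sphLog {n : ℕ} (x y : Amb n) : Amb n :=
  (sphDist x y / Real.sin (sphDist x y)) • (y - Real.cos (sphDist x y) • x)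

/-- Riemannian gradient on the sphere: tangential projection of the ambient gradient. -/
noncomputable def sphGrad {n : ℕ} (φ : Amb n → ℝ) (x : Amb n) : Amb n :=
  gradient φ x - (inner ℝ x (gradient φ x) : ℝ) • x

/-- The gradient map `G_φ(x) = exp_x(∇φ(x))`. -/
noncomputable def gradMap {n : ℕ} (φ : Amb n → ℝ) (x : Amb n) : Amb n :=
  sphExp x (sphGrad φ x)

namespace TwoMono

open Filter Topology InnerProductSpace

local notation "⟪" x ", " y "⟫" => @inner ℝ _ _ x y

variable {n : ℕ}

lemma norm_of_sph {x : Amb n} (hx : x ∈ Sph n) : ‖x‖ = 1 := by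
  simpa [Sph] using hx

instance : Nonempty (Sph n) :=
  ⟨⟨EuclideanSpace.single 0 1, by simp [Sph, EuclideanSpace.norm_single]⟩⟩

lemma inner_le_one {x y : Amb n} (hx : x ∈ Sph n) (hy : y ∈ Sph n) : ⟪x, y⟫ ≤ 1 := by
  have h := abs_real_inner_le_norm x y
  rw [norm_of_sph hx, norm_of_sph hy] at h
  have := le_abs_self (⟪x, y⟫); linarith

lemma neg_one_le_inner {x y : Amb n} (hx : x ∈ Sph n) (hy : y ∈ Sph n) : -1 ≤ ⟪x, y⟫ := by
  have h := abs_real_inner_le_norm x y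
  rw [norm_of_sph hx, norm_of_sph hy] at h
  have := neg_abs_le (⟪x, y⟫); linarith

lemma sphDist_nonneg (x y : Amb n) : 0 ≤ sphDist x y := Real.arccos_nonneg _

lemma sphDist_le_pi (x y : Amb n) : sphDist x y ≤ π := Real.arccos_le_pi _

lemma cost_nonneg (x y : Amb n) : 0 ≤ cost x y := by
  unfold cost; positivity

lemma cost_le (x y : Amb n) : cost x y ≤ π ^ 2 / 2 := by
  have h1 := sphDist_nonneg x y
  have h2 := sphDist_le_pi x y
  have h3 : sphDist x y ^ 2 ≤ π ^ 2 := by nlinarith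
  unfold cost; linarith

lemma inner_self_sph {x : Amb n} (hx : x ∈ Sph n) : ⟪x, x⟫ = (1 : ℝ) := by
  rw [real_inner_self_eq_norm_sq, norm_of_sph hx]; norm_num

lemma sphDist_self {x : Amb n} (hx : x ∈ Sph n) : sphDist x x = 0 := by
  unfold sphDist
  rw [inner_self_sph hx, Real.arccos_one]

lemma cost_self {x : Amb n} (hx : x ∈ Sph n) : cost x x = 0 := by
  unfold cost; rw [sphDist_self hx]; norm_num

lemma cost_comm (x y : Amb n) : cost x y = cost y x := by
  unfold cost sphDist; rw [real_inner_comm]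

lemma sphDist_eq_zero_iff {x y : Amb n} (hx : x ∈ Sph n) (hy : y ∈ Sph n) :
    sphDist x y = 0 ↔ x = y := by
  constructor
  · intro h
    have h1 : (1 : ℝ) ≤ ⟪x, y⟫ := Real.arccos_eq_zero.mp h
    have h2 := inner_le_one hx hy
    exact (inner_eq_one_iff_of_norm_eq_one (norm_of_sph hx) (norm_of_sph hy)).mp (le_antisymm h2 h1)
  · rintro rfl; exact sphDist_self hx

-- boundedness of the defining family of cT
lemma cT_bddAbove {φ : Amb n → ℝ} {m : ℝ} (hm : ∀ z ∈ Sph n, m ≤ φ z) (y : Amb n) :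
    BddAbove (Set.range fun z : Sph n => -cost (z : Amb n) y - φ z) := by
  refine ⟨-m, ?_⟩
  rintro r ⟨z, rfl⟩
  have h1 := cost_nonneg (z : Amb n) y
  have h2 := hm z z.2
  simp only; linarith

lemma le_cT {φ : Amb n → ℝ} {m : ℝ} (hm : ∀ z ∈ Sph n, m ≤ φ z) {z : Amb n}
    (hz : z ∈ Sph n) (y : Amb n) : -cost z y - φ z ≤ cT φ y :=
  le_ciSup (cT_bddAbove hm y) ⟨z, hz⟩

lemma bddBelow_of_cConvex {φ : Amb n → ℝ} (hφ : CConvex φ) :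
    ∃ m, ∀ z ∈ Sph n, m ≤ φ z := by
  by_contra h
  push_neg at h
  have hcT : ∀ y, cT φ y = 0 := by
    intro y
    apply Real.iSup_of_not_bddAbove
    rintro ⟨M, hM⟩
    obtain ⟨z, hz, hzφ⟩ := h (-M - π ^ 2 / 2)
    have h1 : -cost z y - φ z ≤ M := hM ⟨⟨z, hz⟩, rfl⟩
    have h2 := cost_le z y
    linarith
  have hall : ∀ z ∈ Sph n, φ z = 0 := by
    intro z hz
    rw [← hφ z hz]
    have hz2 : cT (cT φ) z = ⨆ w : Sph n, (-(cost (w : Amb n) z) - cT φ w) := rfl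
    rw [hz2]
    simp only [hcT, sub_zero]
    apply le_antisymm
    · exact ciSup_le fun w => neg_nonpos.mpr (cost_nonneg (w : Amb n) z)
    · have hb : BddAbove (Set.range fun w : Sph n => -cost (w : Amb n) z) := by
        refine ⟨0, ?_⟩
        rintro r ⟨w, rfl⟩
        exact neg_nonpos.mpr (cost_nonneg (w : Amb n) z)
      have h5 := le_ciSup hb (⟨z, hz⟩ : Sph n)
      rw [cost_self hz] at h5
      simpa using h5
  obtain ⟨z, hz, hzφ⟩ := h 0
  have := hall z hz
  linarith

lemma curve_mem {x v : Amb n} (hx : x ∈ Sph n) (hv : ‖v‖ = 1) (hxv : ⟪x, v⟫ = 0) (t : ℝ) :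
    Real.cos t • x + Real.sin t • v ∈ Sph n := by
  have hsq : ‖Real.cos t • x + Real.sin t • v‖ ^ 2 = 1 := by
    rw [norm_add_sq_real, real_inner_smul_left, real_inner_smul_right, hxv, norm_smul,
      norm_smul, Real.norm_eq_abs, Real.norm_eq_abs, norm_of_sph hx, hv]
    simp only [mul_one, mul_zero]
    rw [sq_abs, sq_abs]
    linarith [Real.sin_sq_add_cos_sq t]
  have h0 := norm_nonneg (Real.cos t • x + Real.sin t • v)
  have : ‖Real.cos t • x + Real.sin t • v‖ = 1 := by nlinarith
  simpa [Sph] using this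

lemma sphExp_mem {x v : Amb n} (hx : x ∈ Sph n) (hxv : ⟪x, v⟫ = 0) : sphExp x v ∈ Sph n := by
  rcases eq_or_ne v 0 with rfl | hv
  · simpa [sphExp] using hx
  · have hvn : ‖v‖ ≠ 0 := norm_ne_zero_iff.mpr hv
    have hsq : ‖sphExp x v‖ ^ 2 = 1 := by
      unfold sphExp
      rw [norm_add_sq_real, real_inner_smul_left, real_inner_smul_right, hxv, norm_smul,
        norm_smul, Real.norm_eq_abs, Real.norm_eq_abs, norm_of_sph hx]
      simp only [mul_one, mul_zero]
      have h4 : (|Real.sin ‖v‖ / ‖v‖| * ‖v‖) ^ 2 = Real.sin ‖v‖ ^ 2 := by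
        rw [mul_pow, sq_abs, div_pow]; field_simp
      rw [h4, sq_abs]
      linarith [Real.sin_sq_add_cos_sq ‖v‖]
    have h0 := norm_nonneg (sphExp x v)
    have : ‖sphExp x v‖ = 1 := by nlinarith
    simpa [Sph] using this

lemma sphGrad_tangent (φ : Amb n → ℝ) {x : Amb n} (hx : x ∈ Sph n) :
    ⟪x, sphGrad φ x⟫ = 0 := by
  unfold sphGrad
  rw [inner_sub_right, real_inner_smul_right, inner_self_sph hx]
  ring

lemma gradMap_mem (φ : Amb n → ℝ) {x : Amb n} (hx : x ∈ Sph n) : gradMap φ x ∈ Sph n :=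
  sphExp_mem hx (sphGrad_tangent φ hx)

lemma exists_unit_tangent (hn : 1 ≤ n) (x : Amb n) :
    ∃ v : Amb n, ‖v‖ = 1 ∧ ⟪x, v⟫ = 0 := by
  have hne : ((ℝ ∙ x)ᗮ : Submodule ℝ (Amb n)) ≠ ⊥ := by
    intro hbot
    have h1 : ((ℝ ∙ x) : Submodule ℝ (Amb n)) = ⊤ := by
      have := Submodule.orthogonal_orthogonal (ℝ ∙ x)
      rw [hbot] at this
      simpa using this.symm
    have hle : Module.finrank ℝ ((ℝ ∙ x) : Submodule ℝ (Amb n)) ≤ 1 := by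
      rcases eq_or_ne x 0 with rfl | hx0
      · rw [Submodule.span_zero_singleton]; simp
      · rw [finrank_span_singleton hx0]
    have h2 : Module.finrank ℝ (Amb n) ≤ 1 := by
      rw [← finrank_top ℝ (Amb n), ← h1]; exact hle
    rw [finrank_euclideanSpace_fin] at h2
    omega
  obtain ⟨v, hv, hv0⟩ := Submodule.exists_mem_ne_zero_of_ne_bot hne
  refine ⟨‖v‖⁻¹ • v, ?_, ?_⟩
  · rw [norm_smul, norm_inv, norm_norm, inv_mul_cancel₀ (norm_ne_zero_iff.mpr hv0)]
  · rw [real_inner_smul_right]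
    have : ⟪x, v⟫ = 0 := by
      have := (Submodule.mem_orthogonal _ v).mp hv x (Submodule.mem_span_singleton_self x)
      simpa [real_inner_comm] using this
    rw [this, mul_zero]


lemma cost_continuous_left (x : Amb n) : Continuous fun y : Amb n => cost y x := by
  unfold cost sphDist
  exact ((Real.continuous_arccos.comp (continuous_id.inner continuous_const)).pow 2).div_const 2

lemma cost_continuous_right (z : Amb n) : Continuous fun y : Amb n => cost z y := by
  unfold cost sphDist
  exact ((Real.continuous_arccos.comp (continuous_const.inner continuous_id)).pow 2).div_const 2

lemma isCompact_sph : IsCompact (Sph n) := by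
  unfold Sph; exact isCompact_sphere _ _

lemma exists_min {φ : Amb n → ℝ} {m : ℝ} (hm : ∀ z ∈ Sph n, m ≤ φ z) (x : Amb n) :
    ∃ y₀ ∈ Sph n, ∀ y ∈ Sph n, cost y₀ x + cT φ y₀ ≤ cost y x + cT φ y := by
  obtain ⟨w0⟩ := (inferInstance : Nonempty (Sph n))
  set g : Amb n → ℝ := fun y => cost y x + cT φ y with hg
  have hglb : ∀ y, -π ^ 2 / 2 - φ w0 ≤ g y := by
    intro y
    have h1 := le_cT hm w0.2 y
    have h2 := cost_nonneg (w0 : Amb n) y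
    have h3 := cost_le (w0 : Amb n) y
    have h4 := cost_nonneg y x
    simp only [hg]
    linarith
  have hSne : (g '' Sph n).Nonempty := ⟨g w0, ⟨w0, w0.2, rfl⟩⟩
  have hSbdd : BddBelow (g '' Sph n) := ⟨-π ^ 2 / 2 - φ w0, by rintro r ⟨y, _, rfl⟩; exact hglb y⟩
  set m0 := sInf (g '' Sph n) with hm0
  have hseq : ∀ k : ℕ, ∃ y, y ∈ Sph n ∧ g y < m0 + 1 / (k + 1) := by
    intro k
    have hpos : (0 : ℝ) < 1 / (k + 1) := by positivity
    have := exists_lt_of_csInf_lt hSne (by linarith : m0 < m0 + 1 / (k + 1))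
    obtain ⟨r, ⟨y, hy, rfl⟩, hr⟩ := this
    exact ⟨y, hy, hr⟩
  choose u hu hgu using hseq
  obtain ⟨y₀, hy₀, ψ, hψ, hlim⟩ := isCompact_sph.tendsto_subseq hu
  -- LSC: for any c < g y₀, eventually c < g y
  have hLSC : ∀ c : ℝ, c < g y₀ → ∀ᶠ y in 𝓝 y₀, c < g y := by
    intro c hc
    have h1 : c - cost y₀ x < cT φ y₀ := by
      simp only [hg] at hc; linarith
    obtain ⟨z, hz⟩ := exists_lt_of_lt_ciSup h1
    set F : Amb n → ℝ := fun y => cost y x + (-cost (z : Amb n) y - φ z) with hF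
    have hFc : Continuous F :=
      (cost_continuous_left x).add ((cost_continuous_right (z : Amb n)).neg.sub continuous_const)
    have hcF : c < F y₀ := by simp only [hF]; linarith
    have hev : ∀ᶠ y in 𝓝 y₀, c < F y := (hFc.tendsto y₀).eventually (eventually_gt_nhds hcF)
    filter_upwards [hev] with y hy
    have h2 : F y ≤ g y := by
      have := le_cT hm z.2 y
      simp only [hF, hg]
      linarith
    linarith
  have hy₀le : g y₀ ≤ m0 := by
    by_contra hlt
    push_neg at hlt
    obtain ⟨c, hc1, hc2⟩ := exists_between hlt
    have hev1 : ∀ᶠ k : ℕ in atTop, c < g (u (ψ k)) := by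
      have := hlim.eventually (hLSC c hc2)
      simpa [Function.comp] using this
    have hb : ∀ k : ℕ, g (u (ψ k)) < m0 + 1 / (k + 1) := by
      intro k
      have h1 := hgu (ψ k)
      have h2' : k ≤ ψ k := hψ.le_apply
      have h2 : (k : ℝ) + 1 ≤ (ψ k : ℝ) + 1 := by
        have := (Nat.cast_le (α := ℝ)).mpr h2'
        linarith
      have h3 : (0:ℝ) < (k:ℝ) + 1 := by positivity
      have h4 : 1 / ((ψ k : ℝ) + 1) ≤ 1 / ((k : ℝ) + 1) := by
        apply one_div_le_one_div_of_le h3 h2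
      push_cast at h1 ⊢
      linarith
    have hev2 : ∀ᶠ k : ℕ in atTop, c ≤ m0 + 1 / (k + 1) := by
      filter_upwards [hev1] with k hk
      exact (hk.trans (hb k)).le
    have htend : Tendsto (fun k : ℕ => m0 + 1 / (k + 1 : ℝ)) atTop (𝓝 m0) := by
      have h5 : Tendsto (fun k : ℕ => 1 / (k + 1 : ℝ)) atTop (𝓝 0) :=
        tendsto_one_div_add_atTop_nhds_zero_nat
      simpa using tendsto_const_nhds.add h5
    have : c ≤ m0 := ge_of_tendsto htend hev2
    linarith
  refine ⟨y₀, hy₀, fun y hy => ?_⟩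
  have : m0 ≤ g y := csInf_le hSbdd ⟨y, hy, rfl⟩
  have := hy₀le
  simp only [hg] at *
  linarith


lemma hasDerivAt_curve (x v : Amb n) :
    HasDerivAt (fun t : ℝ => Real.cos t • x + Real.sin t • v) v 0 := by
  have h1 : HasDerivAt (fun t : ℝ => Real.cos t • x) ((-Real.sin 0) • x) 0 :=
    (Real.hasDerivAt_cos 0).smul_const x
  have h2 : HasDerivAt (fun t : ℝ => Real.sin t • v) (Real.cos 0 • v) 0 :=
    (Real.hasDerivAt_sin 0).smul_const v
  exact (h1.add h2).congr_deriv (by simp)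

lemma hasDerivAt_phi_curve (φ : Amb n → ℝ) {x v : Amb n}
    (hdx : DifferentiableAt ℝ φ x) (hxv : ⟪x, v⟫ = 0) :
    HasDerivAt (fun t : ℝ => φ (Real.cos t • x + Real.sin t • v)) ⟪sphGrad φ x, v⟫ 0 := by
  have hF : HasFDerivAt φ (toDual ℝ (Amb n) (gradient φ x)) x :=
    hasGradientAt_iff_hasFDerivAt.mp hdx.hasGradientAt
  have hγ0 : (Real.cos 0 • x + Real.sin 0 • v) = x := by simp
  have hF' : HasFDerivAt φ (toDual ℝ (Amb n) (gradient φ x))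
      (Real.cos 0 • x + Real.sin 0 • v) := by rw [hγ0]; exact hF
  have hcomp := hF'.comp_hasDerivAt 0 (hasDerivAt_curve x v)
  have hval : (toDual ℝ (Amb n) (gradient φ x)) v = ⟪sphGrad φ x, v⟫ := by
    rw [toDual_apply_apply]
    unfold sphGrad
    rw [inner_sub_left, real_inner_smul_left, hxv, mul_zero, sub_zero]
  rw [← hval]
  exact hcomp

lemma hasDerivAt_cost_curve {x y' : Amb n} (v : Amb n) (h1 : ⟪x, y'⟫ ≠ 1) (h2 : ⟪x, y'⟫ ≠ -1) :
    HasDerivAt (fun t : ℝ => cost (Real.cos t • x + Real.sin t • v) y')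
      (Real.arccos ⟪x, y'⟫ * -(1 / Real.sqrt (1 - ⟪x, y'⟫ ^ 2)) * ⟪v, y'⟫) 0 := by
  set a : ℝ := ⟪x, y'⟫ with hadef
  set b : ℝ := ⟪v, y'⟫ with hbdef
  have hu : HasDerivAt (fun t : ℝ => Real.cos t * a + Real.sin t * b) b 0 := by
    have hc := (Real.hasDerivAt_cos 0).mul_const a
    have hs := (Real.hasDerivAt_sin 0).mul_const b
    exact (hc.add hs).congr_deriv (by simp)
  have harc : HasDerivAt (fun s : ℝ => Real.arccos s ^ 2 / 2)
      (Real.arccos a * -(1 / Real.sqrt (1 - a ^ 2))) a := by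
    have h3 := ((Real.hasDerivAt_arccos h2 h1).pow 2).div_const 2
    exact h3.congr_deriv (by norm_num; ring)
  have harc' : HasDerivAt (fun s : ℝ => Real.arccos s ^ 2 / 2)
      (Real.arccos a * -(1 / Real.sqrt (1 - a ^ 2))) (Real.cos 0 * a + Real.sin 0 * b) := by
    simpa using harc
  have hcomp := harc'.comp 0 hu
  have heq : (fun t : ℝ => cost (Real.cos t • x + Real.sin t • v) y') =
      fun t : ℝ => Real.arccos (Real.cos t * a + Real.sin t * b) ^ 2 / 2 := by
    funext t
    simp only [cost, sphDist, inner_add_left, real_inner_smul_left, hadef, hbdef]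
  rw [heq]
  exact hcomp

lemma tangent_perp_zero {x w : Amb n}
    (hw_tan : ⟪x, w⟫ = 0)
    (hw_orth : ∀ v : Amb n, ‖v‖ = 1 → ⟪x, v⟫ = 0 → ⟪w, v⟫ = 0) : w = 0 := by
  by_contra hne
  have hnv : ‖w‖ ≠ 0 := norm_ne_zero_iff.mpr hne
  have h2 := hw_orth (‖w‖⁻¹ • w)
    (by rw [norm_smul, norm_inv, norm_norm, inv_mul_cancel₀ hnv])
    (by rw [real_inner_smul_right, hw_tan, mul_zero])
  rw [real_inner_smul_right, real_inner_self_eq_norm_sq] at h2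
  have h3 : ‖w‖⁻¹ * ‖w‖ ^ 2 = ‖w‖ := by field_simp
  rw [h3] at h2
  exact hnv h2

lemma first_order (hn : 1 ≤ n) (φ : Amb n → ℝ) {x y' : Amb n}
    (hx : x ∈ Sph n) (hy' : y' ∈ Sph n) (hdx : DifferentiableAt ℝ φ x)
    (hmin : ∀ z ∈ Sph n, φ x + cost x y' ≤ φ z + cost z y') :
    y' = gradMap φ x := by
  set g := sphGrad φ x with hgdef
  have hg_tan : ⟪x, g⟫ = 0 := sphGrad_tangent φ hx
  have ha_le := inner_le_one hx hy'
  have ha_ge := neg_one_le_inner hx hy'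
  have hloc : ∀ v : Amb n, ‖v‖ = 1 → ⟪x, v⟫ = 0 →
      IsLocalMin (fun t : ℝ => φ (Real.cos t • x + Real.sin t • v)
        + cost (Real.cos t • x + Real.sin t • v) y') 0 := by
    intro v hv hxv
    apply Filter.Eventually.of_forall
    intro t
    have h1 := hmin _ (curve_mem hx hv hxv t)
    simpa using h1
  rcases eq_or_ne (⟪x, y'⟫ : ℝ) 1 with h1 | h1
  · -- y' = x
    have hxy : x = y' := (inner_eq_one_iff_of_norm_eq_one (norm_of_sph hx) (norm_of_sph hy')).mp h1
    have hzero : ∀ v : Amb n, ‖v‖ = 1 → ⟪x, v⟫ = 0 → ⟪g, v⟫ = 0 := by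
      intro v hv hxv
      have hφd := hasDerivAt_phi_curve φ hdx hxv
      have hcd : HasDerivAt (fun t : ℝ => cost (Real.cos t • x + Real.sin t • v) y') 0 0 := by
        have heq : (fun t : ℝ => cost (Real.cos t • x + Real.sin t • v) y')
            =ᶠ[𝓝 (0:ℝ)] fun t : ℝ => t ^ 2 / 2 := by
          filter_upwards [Ioo_mem_nhds (neg_lt_zero.mpr Real.pi_pos) Real.pi_pos] with t ht
          have hin : ⟪(Real.cos t • x + Real.sin t • v), y'⟫ = Real.cos t := by
            rw [← hxy, inner_add_left, real_inner_smul_left, real_inner_smul_left,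
              inner_self_sph hx, real_inner_comm x v, hxv]
            ring
          simp only [cost, sphDist]
          rw [hin]
          rcases le_or_gt 0 t with h | h
          · rw [Real.arccos_cos h ht.2.le]
          · rw [← Real.cos_neg, Real.arccos_cos (by linarith) (by linarith [ht.1])]
            ring
        have hsq : HasDerivAt (fun t : ℝ => t ^ 2 / 2) 0 0 := by
          have := ((hasDerivAt_id (0:ℝ)).pow 2).div_const 2
          simpa using this
        exact hsq.congr_of_eventuallyEq heq
      have h0 := (hloc v hv hxv).hasDerivAt_eq_zero (hφd.add hcd)
      simpa using h0
    have hg0 : g = 0 := tangent_perp_zero hg_tan hzero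
    rw [← hxy]
    unfold gradMap
    rw [← hgdef, hg0]
    simp [sphExp]
  rcases eq_or_ne (⟪x, y'⟫ : ℝ) (-1) with h2 | h2
  · exfalso
    have hxy : y' = -x := by
      have h3 : ⟪x, -y'⟫ = (1:ℝ) := by rw [inner_neg_right, h2]; ring
      have h4 := (inner_eq_one_iff_of_norm_eq_one (norm_of_sph hx)
        (by rw [norm_neg]; exact norm_of_sph hy')).mp h3
      rw [h4]; simp
    obtain ⟨v, hv, hxv⟩ := exists_unit_tangent hn x
    have hφd := hasDerivAt_phi_curve φ hdx hxv
    set f : ℝ → ℝ := fun t => φ (Real.cos t • x + Real.sin t • v) with hfdef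
    set L : ℝ := ⟪g, v⟫ with hLdef
    have hbound : ∀ t ∈ Ioo (-π) π, φ x + π * |t| - t ^ 2 / 2 ≤ f t := by
      intro t ht
      have hmt := hmin _ (curve_mem hx hv hxv t)
      have hcx : cost x y' = π ^ 2 / 2 := by
        simp only [cost, sphDist]
        rw [h2, Real.arccos_neg_one]
      have hin : ⟪(Real.cos t • x + Real.sin t • v), y'⟫ = -Real.cos t := by
        rw [hxy, inner_neg_right, inner_add_left, real_inner_smul_left, real_inner_smul_left,
          inner_self_sph hx, real_inner_comm x v, hxv]
        ring
      have hct : cost (Real.cos t • x + Real.sin t • v) y' = (π - |t|) ^ 2 / 2 := by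
        simp only [cost, sphDist]
        rw [hin, ← Real.cos_pi_sub]
        have habs_lt : |t| < π := abs_lt.mpr ⟨ht.1, ht.2⟩
        have habs : Real.cos (π - t) = Real.cos (π - |t|) := by
          rcases le_or_gt 0 t with h | h
          · rw [abs_of_nonneg h]
          · rw [abs_of_neg h, sub_neg_eq_add, Real.cos_add, Real.cos_sub]
            simp
        rw [habs, Real.arccos_cos (by linarith) (by linarith [abs_nonneg t])]
      rw [hcx, hct] at hmt
      have hsq : |t| ^ 2 = t ^ 2 := sq_abs t
      nlinarith [hmt]
    have hslope := hasDerivAt_iff_tendsto_slope.mp hφd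
    have hf0 : f 0 = φ x := by simp [hfdef]
    have hposL : π ≤ L := by
      have hsub : Tendsto (slope f 0) (𝓝[>] (0:ℝ)) (𝓝 L) :=
        hslope.mono_left (nhdsWithin_mono 0 (fun t ht => ne_of_gt ht))
      have hev : ∀ᶠ t in 𝓝[>] (0:ℝ), π - t / 2 ≤ slope f 0 t := by
        filter_upwards [Ioo_mem_nhdsGT_of_mem (by exact ⟨le_refl 0, Real.pi_pos⟩ : (0:ℝ) ∈ Ico 0 π)]
          with t ht
        have hb := hbound t ⟨by linarith [ht.1, Real.pi_pos], ht.2⟩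
        rw [abs_of_pos ht.1] at hb
        rw [slope_def_field, hf0]
        rw [le_div_iff₀ (by linarith [ht.1] : (0:ℝ) < t - 0)]
        nlinarith [ht.1]
      have hlim2 : Tendsto (fun t : ℝ => π - t / 2) (𝓝[>] (0:ℝ)) (𝓝 π) := by
        have hc : Tendsto (fun t : ℝ => π - t / 2) (𝓝 (0:ℝ)) (𝓝 (π - 0 / 2)) :=
          (continuous_const.sub (continuous_id.div_const 2)).tendsto 0
        simpa using hc.mono_left nhdsWithin_le_nhds
      exact le_of_tendsto_of_tendsto hlim2 hsub hev
    have hnegL : L ≤ -π := by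
      have hsub : Tendsto (slope f 0) (𝓝[<] (0:ℝ)) (𝓝 L) :=
        hslope.mono_left (nhdsWithin_mono 0 (fun t ht => ne_of_lt ht))
      have hev : ∀ᶠ t in 𝓝[<] (0:ℝ), slope f 0 t ≤ -π - t / 2 := by
        filter_upwards [Ioo_mem_nhdsLT_of_mem
          (by exact ⟨neg_lt_zero.mpr Real.pi_pos, le_refl 0⟩ : (0:ℝ) ∈ Ioc (-π) 0)] with t ht
        have hb := hbound t ⟨ht.1, by linarith [ht.2, Real.pi_pos]⟩
        rw [abs_of_neg ht.2] at hb
        rw [slope_def_field, hf0]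
        rw [div_le_iff_of_neg (by linarith [ht.2] : t - 0 < 0)]
        nlinarith [ht.2]
      have hlim2 : Tendsto (fun t : ℝ => -π - t / 2) (𝓝[<] (0:ℝ)) (𝓝 (-π)) := by
        have hc : Tendsto (fun t : ℝ => -π - t / 2) (𝓝 (0:ℝ)) (𝓝 (-π - 0 / 2)) :=
          (continuous_const.sub (continuous_id.div_const 2)).tendsto 0
        simpa using hc.mono_left nhdsWithin_le_nhds
      exact le_of_tendsto_of_tendsto hsub hlim2 hev
    linarith [Real.pi_pos]
  · -- generic case
    have halt : (⟪x, y'⟫ : ℝ) < 1 := lt_of_le_of_ne ha_le h1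
    have hagt : (-1 : ℝ) < ⟪x, y'⟫ := lt_of_le_of_ne ha_ge (Ne.symm h2)
    have hθpos : 0 < Real.arccos ⟪x, y'⟫ := Real.arccos_pos.mpr halt
    have hspos : 0 < Real.sqrt (1 - (⟪x, y'⟫ : ℝ) ^ 2) := Real.sqrt_pos.mpr (by nlinarith)
    have hs' : Real.sqrt (1 - (⟪x, y'⟫ : ℝ) ^ 2) ≠ 0 := ne_of_gt hspos
    have horth : ∀ v : Amb n, ‖v‖ = 1 → ⟪x, v⟫ = 0 →
        ⟪g, v⟫ = Real.arccos ⟪x, y'⟫ / Real.sqrt (1 - (⟪x, y'⟫ : ℝ) ^ 2) * ⟪v, y'⟫ := by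
      intro v hv hxv
      have hφd := hasDerivAt_phi_curve φ hdx hxv
      have hcd := hasDerivAt_cost_curve v h1 h2
      have h0 := (hloc v hv hxv).hasDerivAt_eq_zero (hφd.add hcd)
      rw [← hgdef] at h0
      linear_combination h0
    set w := g - (Real.arccos ⟪x, y'⟫ / Real.sqrt (1 - (⟪x, y'⟫ : ℝ) ^ 2)) •
      (y' - (⟪x, y'⟫ : ℝ) • x) with hwdef
    have hw_tan : ⟪x, w⟫ = 0 := by
      rw [hwdef, inner_sub_right, real_inner_smul_right, inner_sub_right,
        real_inner_smul_right, inner_self_sph hx, hg_tan]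
      ring
    have hw_orth : ∀ v : Amb n, ‖v‖ = 1 → ⟪x, v⟫ = 0 → ⟪w, v⟫ = 0 := by
      intro v hv hxv
      rw [hwdef, inner_sub_left, real_inner_smul_left, inner_sub_left, real_inner_smul_left,
        hxv, horth v hv hxv, real_inner_comm v y']
      ring
    have hw0 : w = 0 := tangent_perp_zero hw_tan hw_orth
    have hgeq : g = (Real.arccos ⟪x, y'⟫ / Real.sqrt (1 - (⟪x, y'⟫ : ℝ) ^ 2)) •
        (y' - (⟪x, y'⟫ : ℝ) • x) := by
      rw [hwdef] at hw0
      exact sub_eq_zero.mp hw0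
    have hnorm_sub : ‖y' - (⟪x, y'⟫ : ℝ) • x‖ = Real.sqrt (1 - (⟪x, y'⟫ : ℝ) ^ 2) := by
      have hns : ‖y' - (⟪x, y'⟫ : ℝ) • x‖ ^ 2 = 1 - (⟪x, y'⟫ : ℝ) ^ 2 := by
        rw [norm_sub_sq_real, real_inner_smul_right, norm_smul, norm_of_sph hy',
          norm_of_sph hx, real_inner_comm x y', Real.norm_eq_abs, mul_one, sq_abs]
        ring
      rw [← hns, Real.sqrt_sq (norm_nonneg _)]
    have hgn : ‖g‖ = Real.arccos ⟪x, y'⟫ := by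
      rw [hgeq, norm_smul, hnorm_sub, Real.norm_eq_abs,
        abs_of_nonneg (div_nonneg hθpos.le hspos.le)]
      rw [div_mul_cancel₀ _ hs']
    have hcosθ : Real.cos (Real.arccos ⟪x, y'⟫) = ⟪x, y'⟫ := Real.cos_arccos ha_ge ha_le
    have hsinθ : Real.sin (Real.arccos ⟪x, y'⟫) = Real.sqrt (1 - (⟪x, y'⟫ : ℝ) ^ 2) :=
      Real.sin_arccos _
    show y' = sphExp x (sphGrad φ x)
    rw [← hgdef]
    unfold sphExp
    rw [hgn, hgeq, hcosθ, hsinθ, smul_smul]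
    have hone : Real.sqrt (1 - (⟪x, y'⟫ : ℝ) ^ 2) / Real.arccos ⟪x, y'⟫ *
        (Real.arccos ⟪x, y'⟫ / Real.sqrt (1 - (⟪x, y'⟫ : ℝ) ^ 2)) = 1 := by
      rw [div_mul_div_comm, mul_comm (Real.sqrt (1 - (⟪x, y'⟫ : ℝ) ^ 2)) (Real.arccos ⟪x, y'⟫),
        div_self (ne_of_gt (mul_pos hθpos hspos))]
    rw [hone, one_smul]
    module



lemma instNE' : Nonempty (Sph n) := inferInstance

lemma key (hn : 1 ≤ n) {φ : Amb n → ℝ} (hφ : CConvex φ) {x : Amb n} (hx : x ∈ Sph n)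
    (hdx : DifferentiableAt ℝ φ x) :
    cT φ (gradMap φ x) = -cost x (gradMap φ x) - φ x := by
  obtain ⟨m, hm⟩ := bddBelow_of_cConvex hφ
  obtain ⟨y₀, hy₀, hy₀min⟩ := exists_min hm x
  have hψlb : ∀ y : Amb n, -π ^ 2 / 2 - φ x ≤ cT φ y := by
    intro y
    have := le_cT hm hx y
    linarith [cost_le x y]
  have houter : ∀ z : Amb n, BddAbove (Set.range fun w : Sph n => -cost (w : Amb n) z - cT φ w) := by
    intro z
    refine ⟨π ^ 2 / 2 + φ x, ?_⟩
    rintro r ⟨w, rfl⟩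
    have h1 := hψlb w
    have h2 := cost_nonneg (w : Amb n) z
    simp only
    linarith
  have hsupx : φ x = -cost y₀ x - cT φ y₀ := by
    rw [← hφ x hx]
    have hd : cT (cT φ) x = ⨆ w : Sph n, (-cost (w : Amb n) x - cT φ w) := rfl
    rw [hd]
    apply le_antisymm
    · apply ciSup_le
      rintro ⟨z, hz⟩
      have := hy₀min z hz
      simp only
      linarith
    · exact le_ciSup (houter x) ⟨y₀, hy₀⟩
  have hminx : ∀ z ∈ Sph n, φ x + cost x y₀ ≤ φ z + cost z y₀ := by
    intro z hz
    have h1 : -cost y₀ z - cT φ y₀ ≤ φ z := by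
      rw [← hφ z hz]
      have hd : cT (cT φ) z = ⨆ w : Sph n, (-cost (w : Amb n) z - cT φ w) := rfl
      rw [hd]
      exact le_ciSup (houter z) ⟨y₀, hy₀⟩
    have h2 : cost x y₀ = cost y₀ x := cost_comm x y₀
    have h3 : cost z y₀ = cost y₀ z := cost_comm z y₀
    linarith [hsupx]
  have hy0G : y₀ = gradMap φ x := first_order hn φ hx hy₀ hdx hminx
  rw [← hy0G, cost_comm]
  linarith [hsupx]

lemma gradMap_dim0 (φ : Amb 0 → ℝ) {x : Amb 0} (hx : x ∈ Sph 0) : gradMap φ x = x := by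
  have hx2 : (x 0) * (x 0) = 1 := by
    have h := inner_self_sph hx
    rw [PiLp.inner_apply] at h
    simpa only [RCLike.inner_apply, Fin.sum_univ_succ, Fin.sum_univ_zero, add_zero, conj_trivial] using h
  have hg : sphGrad φ x = 0 := by
    unfold sphGrad
    ext i
    have hi : i = 0 := by omega
    subst hi
    simp [PiLp.sub_apply, PiLp.smul_apply, PiLp.inner_apply, RCLike.inner_apply,
      smul_eq_mul, PiLp.zero_apply, Fin.sum_univ_succ, -inner_gradient_right]
    linear_combination (-(gradient φ x 0)) * hx2
  unfold gradMap
  rw [hg]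
  simp [sphExp]

end TwoMono

/-- 2-monotonicity of the gradient map of a c-convex function, with
equality only when the two image points coincide. -/


theorem gradMap_two_monotone {n : ℕ} (φ : Amb n → ℝ) (hφ : CConvex φ)
    (x y : Amb n) (hx : x ∈ Sph n) (hy : y ∈ Sph n)
    (hdx : DifferentiableAt ℝ φ x) (hdy : DifferentiableAt ℝ φ y) :
    sphDist x (gradMap φ x) ^ 2 + sphDist y (gradMap φ y) ^ 2 ≤
      sphDist x (gradMap φ y) ^ 2 + sphDist y (gradMap φ x) ^ 2 ∧
    (sphDist x (gradMap φ x) ^ 2 + sphDist y (gradMap φ y) ^ 2 =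
      sphDist x (gradMap φ y) ^ 2 + sphDist y (gradMap φ x) ^ 2 →
      gradMap φ x = gradMap φ y) := by
  rcases Nat.eq_zero_or_pos n with hn0 | hn
  · subst hn0
    rw [TwoMono.gradMap_dim0 φ hx, TwoMono.gradMap_dim0 φ hy,
      TwoMono.sphDist_self hx, TwoMono.sphDist_self hy]
    constructor
    · nlinarith [TwoMono.sphDist_nonneg x y, TwoMono.sphDist_nonneg y x]
    · intro h
      have h1 : sphDist x y = 0 := by
        nlinarith [TwoMono.sphDist_nonneg x y, TwoMono.sphDist_nonneg y x]
      exact (TwoMono.sphDist_eq_zero_iff hx hy).mp h1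
  · have hn' : 1 ≤ n := hn
    have kx := TwoMono.key hn' hφ hx hdx
    have ky := TwoMono.key hn' hφ hy hdy
    obtain ⟨m, hm⟩ := TwoMono.bddBelow_of_cConvex hφ
    have bx : -cost y (gradMap φ x) - φ y ≤ cT φ (gradMap φ x) := TwoMono.le_cT hm hy _
    have by' : -cost x (gradMap φ y) - φ x ≤ cT φ (gradMap φ y) := TwoMono.le_cT hm hx _
    have e : ∀ a b : Amb n, sphDist a b ^ 2 = 2 * cost a b := by
      intro a b; unfold cost; ring
    constructor
    · rw [e, e, e, e]; linarith [kx, ky, bx, by']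
    · intro hEq
      rw [e, e, e, e] at hEq
      have h1 : cT φ (gradMap φ x) = -cost y (gradMap φ x) - φ y := by linarith
      have hminy : ∀ z ∈ Sph n, φ y + cost y (gradMap φ x) ≤ φ z + cost z (gradMap φ x) := by
        intro z hz
        have := TwoMono.le_cT hm hz (gradMap φ x)
        linarith [h1]
      have hres := TwoMono.first_order hn' φ hy (TwoMono.gradMap_mem φ hx) hdy hminy
      exact hres
end
end

section
/- Let A and B be symmetric positive semidefinite n×n real matrices. Then the function t ↦ det((1-t)A + tB)^{1/n} is concave on [0,1]; i.e., det((1-t)A + tB)^{1/n} ≥ (1-t)det(A)^{1/n} + t det(B)^{1/n}. -/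
open Real Set

section Aux
open Matrix Finset

/-- Superadditivity of the geometric mean, special form. -/
lemma gm_superadd {n : ℕ} (hn : 0 < n) (f : Fin n → ℝ) (hf : ∀ i, 0 ≤ f i) :
    1 + (∏ i, f i) ^ ((1 : ℝ) / n) ≤ (∏ i, (1 + f i)) ^ ((1 : ℝ) / n) := by
  have hn' : (n : ℝ) ≠ 0 := Nat.cast_ne_zero.mpr hn.ne'
  set g : Fin n → ℝ := fun i => 1 + f i with hg
  have hgpos : ∀ i, 0 < g i := fun i => by have := hf i; simp only [hg]; linarith
  have hP : 0 < ∏ i, g i := Finset.prod_pos fun i _ => hgpos i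
  have hw : ∀ i ∈ Finset.univ (α := Fin n), (0 : ℝ) ≤ 1 / n := fun i _ =>
    div_nonneg zero_le_one (Nat.cast_nonneg n)
  have hw' : ∑ _i : Fin n, (1 : ℝ) / n = 1 := by
    simp [Finset.sum_const, mul_comm]
    field_simp
  have hz1 : ∀ i ∈ Finset.univ (α := Fin n), (0 : ℝ) ≤ 1 / g i := fun i _ =>
    (one_div_pos.mpr (hgpos i)).le
  have hz2 : ∀ i ∈ Finset.univ (α := Fin n), (0 : ℝ) ≤ f i / g i := fun i _ =>
    div_nonneg (hf i) (hgpos i).le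
  have g1 := Real.geom_mean_le_arith_mean_weighted Finset.univ (fun _ => 1 / n)
    (fun i => 1 / g i) hw hw' hz1
  have g2 := Real.geom_mean_le_arith_mean_weighted Finset.univ (fun _ => 1 / n)
    (fun i => f i / g i) hw hw' hz2
  have hsum : (∑ i, (1 : ℝ) / n * (1 / g i)) + ∑ i, (1 : ℝ) / n * (f i / g i) = 1 := by
    rw [← Finset.sum_add_distrib]
    have he : ∀ i, 1 / (n : ℝ) * (1 / g i) + 1 / n * (f i / g i) = 1 / n := by
      intro i
      rw [← mul_add, ← add_div]
      have : (1 + f i) / g i = 1 := div_self (hgpos i).ne'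
      rw [this, mul_one]
    rw [Finset.sum_congr rfl fun i _ => he i, hw']
  have key : (∏ i, (1 / g i)) ^ ((1 : ℝ) / n) + (∏ i, (f i / g i)) ^ ((1 : ℝ) / n) ≤ 1 := by
    calc (∏ i, (1 / g i)) ^ ((1 : ℝ) / n) + (∏ i, (f i / g i)) ^ ((1 : ℝ) / n)
        = (∏ i, (1 / g i) ^ ((1 : ℝ) / n)) + ∏ i, (f i / g i) ^ ((1 : ℝ) / n) := by
          rw [Real.finset_prod_rpow _ _ hz1, Real.finset_prod_rpow _ _ hz2]
      _ ≤ (∑ i, (1 : ℝ) / n * (1 / g i)) + ∑ i, (1 : ℝ) / n * (f i / g i) := add_le_add g1 g2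
      _ = 1 := hsum
  have e1 : (∏ i, (1 / g i)) = 1 / ∏ i, g i := by
    rw [Finset.prod_div_distrib, Finset.prod_const_one]
  have e2 : (∏ i, (f i / g i)) = (∏ i, f i) / ∏ i, g i := Finset.prod_div_distrib _ _
  rw [e1, e2, Real.div_rpow (by positivity) hP.le,
    Real.div_rpow (Finset.prod_nonneg fun i _ => hf i) hP.le, Real.one_rpow,
    ← add_div, div_le_one (by positivity)] at key
  exact key

/-- PosSemidef with nonzero determinant is PosDef. -/
lemma psd_posDef_of_det_ne_zero {n : ℕ} {A : Matrix (Fin n) (Fin n) ℝ}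
    (hA : A.PosSemidef) (hd : A.det ≠ 0) : A.PosDef := by
  refine Matrix.posDef_iff_dotProduct_mulVec.mpr ⟨hA.1, fun x hx => ?_⟩
  rcases lt_or_eq_of_le ((Matrix.posSemidef_iff_dotProduct_mulVec.mp hA).2 x) with h | h
  · exact h
  · exfalso
    have h0 : A *ᵥ x = 0 := (hA.dotProduct_mulVec_zero_iff x).mp h.symm
    have : x = 0 := by
      have hu : IsUnit A := (Matrix.isUnit_iff_isUnit_det A).mpr hd.isUnit
      have := Matrix.mulVec_injective_iff_isUnit.mpr hu
      simpa [h0] using (this.eq_iff (a := x) (b := 0)).mp (by simp [h0])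
    exact hx this

lemma psd_det_nonneg {n : ℕ} {A : Matrix (Fin n) (Fin n) ℝ} (hA : A.PosSemidef) :
    0 ≤ A.det := by
  rcases eq_or_ne A.det 0 with h | h
  · simp [h]
  · exact (psd_posDef_of_det_ne_zero hA h).det_pos.le

open scoped MatrixOrder in
/-- Core Minkowski inequality with A positive definite. -/
lemma minkowski_core {n : ℕ} (hn : 0 < n) {A B : Matrix (Fin n) (Fin n) ℝ}
    (hA : A.PosDef) (hB : B.PosSemidef) :
    A.det ^ ((1 : ℝ) / n) + B.det ^ ((1 : ℝ) / n) ≤ (A + B).det ^ ((1 : ℝ) / n) := by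
  classical
  set S := CFC.sqrt A with hSdef
  have hS : S.PosSemidef := (CFC.sqrt_nonneg A).posSemidef
  have hSS : S * S = A := CFC.sqrt_mul_sqrt_self A hA.posSemidef.nonneg
  have hdetS : S.det * S.det = A.det := by rw [← Matrix.det_mul, hSS]
  have hdetSne : S.det ≠ 0 := by
    intro h; rw [h, mul_zero] at hdetS; exact hA.det_pos.ne' hdetS.symm
  have hU : IsUnit S.det := hdetSne.isUnit
  set M := S⁻¹ * B * S⁻¹ with hMdef
  have hSinvH : S⁻¹ᴴ = S⁻¹ := hS.1.inv
  have hM : M.PosSemidef := by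
    have := hB.mul_mul_conjTranspose_same S⁻¹
    rwa [hSinvH] at this
  have hBconj : S * M * S = B := by
    rw [hMdef]
    calc S * (S⁻¹ * B * S⁻¹) * S = (S * S⁻¹) * B * (S⁻¹ * S) := by
          simp only [Matrix.mul_assoc]
      _ = B := by rw [Matrix.mul_nonsing_inv S hU, Matrix.nonsing_inv_mul S hU,
          Matrix.one_mul, Matrix.mul_one]
  have hconj : S * (1 + M) * S = A + B := by
    rw [mul_add, mul_one, add_mul, hSS, hBconj]
  have hdet1M : (A + B).det = A.det * (1 + M).det := by
    rw [← hconj, Matrix.det_mul, Matrix.det_mul, ← hdetS]; ring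
  have hdetM : A.det * M.det = B.det := by
    rw [hMdef, Matrix.det_mul, Matrix.det_mul, Matrix.det_nonsing_inv, Ring.inverse_eq_inv, ← hdetS]
    field_simp
  -- eigenvalues of M
  set μ := hM.1.eigenvalues with hμ
  have hμ0 : ∀ i, 0 ≤ μ i := hM.eigenvalues_nonneg
  have hdetMprod : M.det = ∏ i, μ i := by
    have := hM.1.det_eq_prod_eigenvalues
    simpa using this
  have hdet1Mprod : (1 + M).det = ∏ i, (1 + μ i) := by
    set U : Matrix (Fin n) (Fin n) ℝ := (hM.1.eigenvectorUnitary : Matrix (Fin n) (Fin n) ℝ)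
    have hUU : U * star U = 1 := (Matrix.mem_unitaryGroup_iff).mp hM.1.eigenvectorUnitary.2
    have hspec : M = U * Matrix.diagonal (RCLike.ofReal ∘ μ) * star U := by
        have := hM.1.spectral_theorem; rwa [Unitary.conjStarAlgAut_apply] at this
    have h1M : 1 + M = U * (1 + Matrix.diagonal (RCLike.ofReal ∘ μ)) * star U := by
      rw [mul_add, add_mul, mul_one, hUU, ← hspec]
    rw [h1M, Matrix.det_mul, Matrix.det_mul, mul_comm, ← mul_assoc, ← Matrix.det_mul]
    have : star U * U = 1 := (Matrix.mem_unitaryGroup_iff').mp hM.1.eigenvectorUnitary.2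
    rw [this, Matrix.det_one, one_mul]
    have : (1 : Matrix (Fin n) (Fin n) ℝ) + Matrix.diagonal (RCLike.ofReal ∘ μ)
        = Matrix.diagonal (fun i => 1 + μ i) := by
      rw [← Matrix.diagonal_one, Matrix.diagonal_add]
      congr 1
    rw [this, Matrix.det_diagonal]
  -- assemble
  have hAd : (0 : ℝ) < A.det := hA.det_pos
  have hgm := gm_superadd hn μ hμ0
  calc A.det ^ ((1 : ℝ) / n) + B.det ^ ((1 : ℝ) / n)
      = A.det ^ ((1 : ℝ) / n) * (1 + (∏ i, μ i) ^ ((1 : ℝ) / n)) := by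
        rw [mul_add, mul_one, ← Real.mul_rpow hAd.le (Finset.prod_nonneg fun i _ => hμ0 i), ← hdetMprod, hdetM]
    _ ≤ A.det ^ ((1 : ℝ) / n) * (∏ i, (1 + μ i)) ^ ((1 : ℝ) / n) := by
        apply mul_le_mul_of_nonneg_left hgm (Real.rpow_nonneg hAd.le _)
    _ = (A + B).det ^ ((1 : ℝ) / n) := by
        rw [← Real.mul_rpow hAd.le (Finset.prod_nonneg fun i _ => by have := hμ0 i; linarith),
          hdet1M, hdet1Mprod]

lemma minkowski_psd {n : ℕ} (hn : 0 < n) {A B : Matrix (Fin n) (Fin n) ℝ}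
    (hA : A.PosSemidef) (hB : B.PosSemidef) :
    A.det ^ ((1 : ℝ) / n) + B.det ^ ((1 : ℝ) / n) ≤ (A + B).det ^ ((1 : ℝ) / n) := by
  rcases eq_or_ne A.det 0 with hdA | hdA
  · rcases eq_or_ne B.det 0 with hdB | hdB
    · have h1n : (1 : ℝ) / n ≠ 0 := one_div_ne_zero (Nat.cast_ne_zero.mpr hn.ne')
      rw [hdA, hdB, Real.zero_rpow h1n]
      have h0 : (0 : ℝ) ≤ (A + B).det := psd_det_nonneg (hA.add hB)
      simpa using Real.rpow_nonneg h0 ((1 : ℝ) / n)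
    · have hBpd := psd_posDef_of_det_ne_zero hB hdB
      have := minkowski_core hn hBpd hA
      rw [add_comm B A, add_comm (B.det ^ ((1:ℝ)/n))] at this
      exact this
  · exact minkowski_core hn (psd_posDef_of_det_ne_zero hA hdA) hB

end Aux

open Matrix Finset in
/-- Minkowski determinant concavity: for symmetric positive semidefinite
`n×n` real matrices `A, B` and `t ∈ [0,1]`,
`det((1-t)A + tB)^{1/n} ≥ (1-t) det(A)^{1/n} + t det(B)^{1/n}`. -/
theorem det_rpow_concave {n : ℕ} (hn : 0 < n) (A B : Matrix (Fin n) (Fin n) ℝ)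
    (hA : A.PosSemidef) (hB : B.PosSemidef) (t : ℝ) (ht : t ∈ Set.Icc (0 : ℝ) 1) :
    (1 - t) * A.det ^ ((1 : ℝ) / n) + t * B.det ^ ((1 : ℝ) / n) ≤
      ((1 - t) • A + t • B).det ^ ((1 : ℝ) / n) := by
  obtain ⟨ht0, ht1⟩ := ht
  have hs : 0 ≤ 1 - t := by linarith
  have hn' : n ≠ 0 := hn.ne'
  have hsmul : ∀ (c : ℝ), 0 ≤ c → ∀ (C : Matrix (Fin n) (Fin n) ℝ), C.PosSemidef →
      (c • C).PosSemidef ∧ (c • C).det ^ ((1 : ℝ) / n) = c * C.det ^ ((1 : ℝ) / n) := by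
    intro c hc C hC
    constructor
    · refine Matrix.posSemidef_iff_dotProduct_mulVec.mpr ⟨?_, fun x => ?_⟩
      · show (c • C)ᴴ = c • C
        rw [Matrix.conjTranspose_smul, star_trivial, hC.1.eq]
      · rw [Matrix.smul_mulVec, dotProduct_smul, smul_eq_mul]
        exact mul_nonneg hc ((Matrix.posSemidef_iff_dotProduct_mulVec.mp hC).2 x)
    · rw [Matrix.det_smul, Fintype.card_fin, one_div,
        Real.mul_rpow (pow_nonneg hc n) (psd_det_nonneg hC),
        Real.pow_rpow_inv_natCast hc hn']
  obtain ⟨hA', eA⟩ := hsmul (1 - t) hs A hA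
  obtain ⟨hB', eB⟩ := hsmul t ht0 B hB
  calc (1 - t) * A.det ^ ((1 : ℝ) / n) + t * B.det ^ ((1 : ℝ) / n)
      = ((1 - t) • A).det ^ ((1 : ℝ) / n) + (t • B).det ^ ((1 : ℝ) / n) := by rw [eA, eB]
    _ ≤ ((1 - t) • A + t • B).det ^ ((1 : ℝ) / n) := minkowski_psd hn hA' hB'
end

section
/- Let g : [0, π) → ℝ be defined by g(ρ) = log(sin ρ / ρ) (with g(0) = 0), and let v₀, v₁ be vectors in ℝ^n with |v₀| < π and |v₁| < π. Then the function t ↦ g(|(1-t)v₀ + t v₁|) is concave on [0,1]. Consequently, for φ_t = (1-t)φ₀ + tφ₁ with |∇φ_i(x)| < π, the map t ↦ log σ_t(x) = (n-1)·g(|∇φ_t(x)|) is concave. -/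
open Real Set

noncomputable section

/-- `g(ρ) = log(sin ρ / ρ)`, extended by `0` at `ρ = 0`. -/
noncomputable def gfun (ρ : ℝ) : ℝ :=
  open Classical in
  if ρ = 0 then 0 else Real.log (Real.sin ρ / ρ)

/-! ### Auxiliary lemmas -/

lemma gfun_eq : gfun = fun ρ => Real.log (Real.sin ρ / ρ) := by
  funext ρ
  unfold gfun
  split_ifs with h
  · simp [h]
  · rfl

lemma mul_cos_le_sin' {ρ : ℝ} (hρ : ρ ∈ Ioo 0 π) : ρ * Real.cos ρ ≤ Real.sin ρ := by
  obtain ⟨h0, hπ⟩ := hρ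
  have hs : 0 < Real.sin ρ := Real.sin_pos_of_pos_of_lt_pi h0 hπ
  by_cases hc : Real.cos ρ ≤ 0
  · nlinarith
  · push_neg at hc
    have h2 : ρ < π / 2 := by
      by_contra h
      push_neg at h
      have := Real.cos_nonpos_of_pi_div_two_le_of_le h (by linarith [Real.pi_pos])
      linarith
    have := Real.lt_tan h0 h2
    rw [Real.tan_eq_sin_div_cos, lt_div_iff₀ hc] at this
    linarith

lemma gfun_hasDerivAt {ρ : ℝ} (hρ : ρ ∈ Ioo 0 π) :
    HasDerivAt gfun (Real.cos ρ / Real.sin ρ - ρ⁻¹) ρ := by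
  obtain ⟨h0, hπ⟩ := hρ
  have hs : 0 < Real.sin ρ := Real.sin_pos_of_pos_of_lt_pi h0 hπ
  have hne : ρ ≠ 0 := ne_of_gt h0
  have h1 : HasDerivAt (fun y => Real.sin y / y)
      ((Real.cos ρ * ρ - Real.sin ρ * 1) / ρ ^ 2) ρ :=
    (Real.hasDerivAt_sin ρ).div (hasDerivAt_id ρ) hne
  have h2 : Real.sin ρ / ρ ≠ 0 := by positivity
  have h3 := h1.log h2
  rw [gfun_eq]
  convert h3 using 1
  field_simp

lemma gfun_contOn : ContinuousOn gfun (Ico 0 π) := by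
  intro ρ hρ
  rcases eq_or_lt_of_le hρ.1 with h0 | h0
  · rw [← continuousWithinAt_diff_self]
    have hslope := hasDerivAt_iff_tendsto_slope.mp (Real.hasDerivAt_sin 0)
    have hs : Filter.Tendsto (fun y => Real.sin y / y) (nhdsWithin 0 {(0:ℝ)}ᶜ) (nhds 1) := by
      simp only [Real.cos_zero] at hslope
      refine hslope.congr fun y => ?_
      simp [slope_def_field, div_eq_mul_inv, mul_comm]
    have hlog : Filter.Tendsto (fun y => Real.log (Real.sin y / y))
        (nhdsWithin 0 {(0:ℝ)}ᶜ) (nhds 0) := by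
      have := (Real.continuousAt_log one_ne_zero).tendsto.comp hs
      simpa [Function.comp_def] using this
    have : ContinuousWithinAt gfun {(0:ℝ)}ᶜ 0 := by
      rw [ContinuousWithinAt]
      have hg0 : gfun 0 = 0 := by simp [gfun]
      rw [hg0, gfun_eq]
      exact hlog
    rw [← h0]
    exact this.mono (by intro y hy; exact hy.2)
  · have hs : 0 < Real.sin ρ := Real.sin_pos_of_pos_of_lt_pi h0 hρ.2
    have : ContinuousAt gfun ρ := by
      rw [gfun_eq]
      refine (Real.continuousAt_log (by positivity)).comp ?_
      exact (Real.continuous_sin.continuousAt).div continuousAt_id (ne_of_gt h0)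
    exact this.continuousWithinAt

lemma gfun_antitoneOn : AntitoneOn gfun (Ico 0 π) := by
  apply antitoneOn_of_hasDerivWithinAt_nonpos (convex_Ico 0 π) gfun_contOn
    (f' := fun ρ => Real.cos ρ / Real.sin ρ - ρ⁻¹)
  · intro ρ hρ
    rw [interior_Ico] at hρ
    exact (gfun_hasDerivAt hρ).hasDerivWithinAt
  · intro ρ hρ
    rw [interior_Ico] at hρ
    obtain ⟨h0, hπ⟩ := hρ
    have hs : 0 < Real.sin ρ := Real.sin_pos_of_pos_of_lt_pi h0 hπ
    have key := mul_cos_le_sin' ⟨h0, hπ⟩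
    rw [sub_nonpos, div_le_iff₀ hs, inv_mul_eq_div, le_div_iff₀ h0]
    linarith

lemma gfun_concaveOn : ConcaveOn ℝ (Ico 0 π) gfun := by
  apply concaveOn_of_hasDerivWithinAt2_nonpos (convex_Ico 0 π) gfun_contOn
    (f' := fun ρ => Real.cos ρ / Real.sin ρ - ρ⁻¹)
    (f'' := fun ρ => (ρ ^ 2)⁻¹ - (Real.sin ρ ^ 2)⁻¹)
  · intro ρ hρ
    rw [interior_Ico] at hρ
    exact (gfun_hasDerivAt hρ).hasDerivWithinAt
  · intro ρ hρ
    rw [interior_Ico] at hρ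
    obtain ⟨h0, hπ⟩ := hρ
    have hs : 0 < Real.sin ρ := Real.sin_pos_of_pos_of_lt_pi h0 hπ
    have h1 : HasDerivAt (fun y => Real.cos y / Real.sin y)
        ((-Real.sin ρ * Real.sin ρ - Real.cos ρ * Real.cos ρ) / Real.sin ρ ^ 2) ρ :=
      (Real.hasDerivAt_cos ρ).div (Real.hasDerivAt_sin ρ) (ne_of_gt hs)
    have h2 : HasDerivAt (fun y : ℝ => y⁻¹) (-(ρ ^ 2)⁻¹) ρ := hasDerivAt_inv (ne_of_gt h0)
    have h3 := h1.sub h2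
    refine HasDerivAt.hasDerivWithinAt ?_
    convert h3 using 1
    · rfl
    have hpyth : Real.sin ρ ^ 2 + Real.cos ρ ^ 2 = 1 := Real.sin_sq_add_cos_sq ρ
    field_simp
    linear_combination (ρ ^ 2) * hpyth
  · intro ρ hρ
    rw [interior_Ico] at hρ
    obtain ⟨h0, hπ⟩ := hρ
    have hs : 0 < Real.sin ρ := Real.sin_pos_of_pos_of_lt_pi h0 hπ
    have hle : Real.sin ρ ≤ ρ := (Real.sin_lt h0).le
    have h2 : Real.sin ρ ^ 2 ≤ ρ ^ 2 := by nlinarith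
    have : (ρ ^ 2)⁻¹ ≤ (Real.sin ρ ^ 2)⁻¹ := by
      apply inv_anti₀ (by positivity) h2
    linarith

lemma combo_lt' {a b x y : ℝ} (ha : 0 ≤ a) (hb : 0 ≤ b) (hab : a + b = 1)
    (hx : x < π) (hy : y < π) : a * x + b * y < π := by
  rcases eq_or_lt_of_le ha with h | h
  · subst h
    have hb1 : b = 1 := by linarith
    subst hb1
    simpa using hy
  · have h1 := mul_lt_mul_of_pos_left hx h
    have h2 := mul_le_mul_of_nonneg_left hy.le hb
    have h3 : a * π + b * π = π := by rw [← add_mul, hab, one_mul]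
    linarith

theorem gfun_norm_concaveOn {N : Type*} [NormedAddCommGroup N] [NormedSpace ℝ N]
    (v₀ v₁ : N) (hv₀ : ‖v₀‖ < π) (hv₁ : ‖v₁‖ < π) :
    ConcaveOn ℝ (Set.Icc (0 : ℝ) 1) (fun t => gfun ‖(1 - t) • v₀ + t • v₁‖) := by
  set F : ℝ → ℝ := fun t => ‖(1 - t) • v₀ + t • v₁‖ with hF
  have hFmem : ∀ t ∈ Icc (0:ℝ) 1, F t ∈ Ico 0 π := by
    intro t ht
    refine ⟨norm_nonneg _, ?_⟩
    have h : F t ≤ (1 - t) * ‖v₀‖ + t * ‖v₁‖ := by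
      calc F t ≤ ‖(1 - t) • v₀‖ + ‖t • v₁‖ := norm_add_le _ _
      _ = (1 - t) * ‖v₀‖ + t * ‖v₁‖ := by
          rw [norm_smul, norm_smul, Real.norm_eq_abs, Real.norm_eq_abs,
            abs_of_nonneg (by linarith [ht.2] : (0:ℝ) ≤ 1 - t), abs_of_nonneg ht.1]
    have := combo_lt' (by linarith [ht.2] : (0:ℝ) ≤ 1 - t) ht.1 (by ring) hv₀ hv₁
    linarith
  refine ⟨convex_Icc 0 1, fun s hs u hu a b ha hb hab => ?_⟩
  have hmem : a • s + b • u ∈ Icc (0:ℝ) 1 := (convex_Icc 0 1) hs hu ha hb hab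
  have hvec : (1 - (a • s + b • u)) • v₀ + (a • s + b • u) • v₁
      = a • ((1 - s) • v₀ + s • v₁) + b • ((1 - u) • v₀ + u • v₁) := by
    have hb' : b = 1 - a := by linarith
    subst hb'
    simp only [smul_eq_mul]
    module
  have hnorm : F (a • s + b • u) ≤ a * F s + b * F u := by
    rw [hF]
    simp only
    rw [hvec]
    calc ‖a • ((1 - s) • v₀ + s • v₁) + b • ((1 - u) • v₀ + u • v₁)‖
        ≤ ‖a • ((1 - s) • v₀ + s • v₁)‖ + ‖b • ((1 - u) • v₀ + u • v₁)‖ := norm_add_le _ _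
      _ = a * F s + b * F u := by
          rw [norm_smul, norm_smul, Real.norm_eq_abs, Real.norm_eq_abs,
            abs_of_nonneg ha, abs_of_nonneg hb]
  have hFs := hFmem s hs
  have hFu := hFmem u hu
  have hcombo : a * F s + b * F u ∈ Ico 0 π :=
    ⟨by positivity, combo_lt' ha hb hab hFs.2 hFu.2⟩
  calc a • gfun (F s) + b • gfun (F u) ≤ gfun (a * F s + b * F u) := by
        have := gfun_concaveOn.2 hFs hFu ha hb hab
        simpa using this
    _ ≤ gfun (F (a • s + b • u)) :=
        gfun_antitoneOn (hFmem _ hmem) hcombo hnorm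

lemma sphGrad_zero (φ : Amb 0 → ℝ) (x : Amb 0) (hx : x ∈ Sph 0) :
    sphGrad φ x = 0 := by
  have hnorm : ‖x‖ = 1 := by
    simpa [Sph, mem_sphere_iff_norm] using hx
  have hx2 : x 0 * x 0 = 1 := by
    have h := real_inner_self_eq_norm_sq x
    rw [hnorm] at h
    simpa only [PiLp.inner_apply, Fin.sum_univ_succ, Fin.sum_univ_zero, add_zero, RCLike.inner_apply, conj_trivial, one_pow] using h
  unfold sphGrad
  ext i
  have hi : i = 0 := by omega
  subst hi
  simp only [PiLp.sub_apply, PiLp.smul_apply, smul_eq_mul, PiLp.inner_apply,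
    Fin.sum_univ_succ, Fin.sum_univ_zero, RCLike.inner_apply, conj_trivial,
    PiLp.zero_apply, add_zero]
  linear_combination (-(gradient φ x 0)) * hx2

/-- for vectors `v₀, v₁` of norm `< π`, `t ↦ g(‖(1-t)v₀ + tv₁‖)` is
concave on `[0,1]`; consequently for gradients `∇φᵢ(x) = vᵢ` of norm `< π`,
`t ↦ log σ_t(x) = (n-1)·g(‖∇φ_t(x)‖)` is concave. -/
theorem log_sigma_concave {n : ℕ} (v₀ v₁ : Amb n)
    (hv₀ : ‖v₀‖ < Real.pi) (hv₁ : ‖v₁‖ < Real.pi)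
    (φ₀ φ₁ : Amb n → ℝ) (x : Amb n) (hx : x ∈ Sph n)
    (hg₀ : sphGrad φ₀ x = v₀) (hg₁ : sphGrad φ₁ x = v₁) :
    ConcaveOn ℝ (Set.Icc (0 : ℝ) 1) (fun t => gfun ‖(1 - t) • v₀ + t • v₁‖) ∧
    ConcaveOn ℝ (Set.Icc (0 : ℝ) 1) (fun t =>
      ((n : ℝ) - 1) * gfun ‖(1 - t) • sphGrad φ₀ x + t • sphGrad φ₁ x‖) := by
  refine ⟨gfun_norm_concaveOn v₀ v₁ hv₀ hv₁, ?_⟩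
  rw [hg₀, hg₁]
  cases n with
  | zero =>
    have h0 : v₀ = 0 := by rw [← hg₀]; exact sphGrad_zero φ₀ x hx
    have h1 : v₁ = 0 := by rw [← hg₁]; exact sphGrad_zero φ₁ x hx
    subst h0; subst h1
    have hg0 : gfun 0 = 0 := by simp [gfun]
    simp only [smul_zero, add_zero, norm_zero, hg0, mul_zero]
    exact concaveOn_const 0 (convex_Icc 0 1)
  | succ m =>
    have hc : (0:ℝ) ≤ ((m + 1 : ℕ) : ℝ) - 1 := by push_cast; linarith
    have := (gfun_norm_concaveOn v₀ v₁ hv₀ hv₁).smul hc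
    simpa [Pi.smul_apply, smul_eq_mul] using this
end
end

section
/- Let f ∈ C²([0,π]) with f'(0) = f'(π) = 0 and f'' > -1 almost everywhere, let ζ ∈ [0,π], and define h : (-π,π] → ℝ by h(ξ) = ξ²/2 + f(min{|ξ - ζ|, |ξ - ζ + 2π|}). Then h is strictly convex on (-π,π), satisfies h'(π-0) > h'(-π+0) at the endpoint (so ξ = π is not a minimizer), and hence h has a unique minimizer in (-π,π). -/
open Real Set MeasureTheory

private lemma odr_glue_mono {F : ℝ → ℝ} {a b c : ℝ}
    (h1 : MonotoneOn F (Icc a b)) (h2 : MonotoneOn F (Icc b c)) :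
    MonotoneOn F (Icc a c) := by
  rcases le_total a b with hab | hba
  · rcases le_total b c with hbc | hcb
    · intro x hx y hy hxy
      rcases le_total y b with hyb | hby
      · exact h1 ⟨hx.1, le_trans hxy hyb⟩ ⟨hy.1, hyb⟩ hxy
      · rcases le_total x b with hxb | hbx
        · exact le_trans (h1 ⟨hx.1, hxb⟩ ⟨hab, le_refl b⟩ hxb)
            (h2 ⟨le_refl b, hbc⟩ ⟨hby, hy.2⟩ hby)
        · exact h2 ⟨hbx, hx.2⟩ ⟨hby, hy.2⟩ hxy
    · exact h1.mono (Icc_subset_Icc (le_refl a) hcb)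
  · exact h2.mono (Icc_subset_Icc hba (le_refl c))

private lemma odr_bad_interval {φ : ℝ → ℝ}
    (hae : ∀ᵐ r ∂(volume.restrict (Icc 0 Real.pi)), -1 < φ r)
    {s t : ℝ} (h0 : 0 ≤ s) (hπ : t ≤ Real.pi) (hst : s < t)
    (hbad : ∀ r ∈ Ioo s t, ¬ (-1 < φ r)) : False := by
  rw [MeasureTheory.ae_iff] at hae
  have hsub : Ioo s t ⊆ {r | ¬ (-1 < φ r)} := fun r hr => hbad r hr
  have h0' : (volume.restrict (Icc 0 Real.pi)) (Ioo s t) = 0 :=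
    measure_mono_null hsub hae
  rw [Measure.restrict_apply measurableSet_Ioo] at h0'
  have hIcc : Ioo s t ∩ Icc 0 Real.pi = Ioo s t := by
    rw [inter_eq_left]
    exact fun r hr => ⟨le_trans h0 hr.1.le, le_trans hr.2.le hπ⟩
  rw [hIcc, Real.volume_Ioo] at h0'
  exact absurd h0' (by simp [ENNReal.ofReal_eq_zero]; linarith)

private lemma odr_ge_neg_one {φ : ℝ → ℝ}
    (hc : ContinuousOn φ (Icc 0 Real.pi))
    (hae : ∀ᵐ r ∂(volume.restrict (Icc 0 Real.pi)), -1 < φ r) :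
    ∀ r ∈ Icc 0 Real.pi, -1 ≤ φ r := by
  intro r₀ hr₀
  by_contra hlt
  push_neg at hlt
  have hmem : φ ⁻¹' (Iio (-1)) ∈ nhdsWithin r₀ (Icc 0 Real.pi) :=
    (hc r₀ hr₀) (Iio_mem_nhds hlt)
  rw [mem_nhdsWithin] at hmem
  obtain ⟨U, hUo, hr₀U, hUsub⟩ := hmem
  obtain ⟨δ, hδ, hball⟩ := Metric.isOpen_iff.1 hUo r₀ hr₀U
  set α := max 0 (r₀ - δ/2) with hα
  set β := min Real.pi (r₀ + δ/2) with hβ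
  have hαβ : α < β := by
    rw [hα, hβ, max_lt_iff, lt_min_iff, lt_min_iff]
    refine ⟨⟨Real.pi_pos, by linarith [hr₀.1]⟩, ⟨by linarith [hr₀.2], by linarith⟩⟩
  have hsub : Ioo α β ⊆ {r | ¬ (-1 < φ r)} := by
    intro x hx
    have hx1 : x ∈ Icc 0 Real.pi :=
      ⟨le_trans (le_max_left _ _) hx.1.le, le_trans hx.2.le (min_le_left _ _)⟩
    have hx2 : x ∈ U := by
      apply hball
      rw [Metric.mem_ball, Real.dist_eq, abs_lt]
      constructor
      · have := le_max_right 0 (r₀ - δ/2); linarith [hx.1]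
      · have := min_le_right Real.pi (r₀ + δ/2); linarith [hx.2]
    have : φ x < -1 := hUsub ⟨hx2, hx1⟩
    simpa using this.le
  exact odr_bad_interval hae (le_max_left _ _) (min_le_left _ _) hαβ
    (fun r hr => hsub hr)

private lemma odr_affine_contra {f1 f2 : ℝ → ℝ}
    (hf1d : ∀ r ∈ Icc 0 Real.pi, HasDerivWithinAt f1 (f2 r) (Icc 0 Real.pi) r)
    (hae : ∀ᵐ r ∂(volume.restrict (Icc 0 Real.pi)), -1 < f2 r)
    {c s t : ℝ} (h0 : 0 ≤ s) (hπ : t ≤ Real.pi) (hst : s < t)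
    (haff : ∀ r ∈ Icc s t, f1 r = c - r) : False := by
  apply odr_bad_interval hae h0 hπ hst
  intro r hr
  have hrI : r ∈ Icc 0 Real.pi := ⟨le_trans h0 hr.1.le, le_trans hr.2.le hπ⟩
  have hnhds : Icc 0 Real.pi ∈ nhds r :=
    Icc_mem_nhds (lt_of_le_of_lt h0 hr.1) (lt_of_lt_of_le hr.2 hπ)
  have h1 : HasDerivAt f1 (f2 r) r := (hf1d r hrI).hasDerivAt hnhds
  have h2 : HasDerivAt f1 (-1) r := by
    have haff' : HasDerivAt (fun y : ℝ => c - y) (-1) r := by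
      simpa using (hasDerivAt_id r).const_sub c
    apply haff'.congr_of_eventuallyEq
    filter_upwards [isOpen_Ioo.mem_nhds hr] with y hy
    exact haff y (Ioo_subset_Icc_self hy)
  rw [h1.unique h2]
  simp

/-- the one-dimensional reduction `h(ξ) = ξ²/2 + f(min{|ξ-ζ|, |ξ-ζ+2π|})`
(for `f ∈ C²([0,π])` with `f'(0) = f'(π) = 0`, `f'' > -1` a.e., and `ζ ∈ [0,π]`) is
strictly convex on `(-π,π)`, has `h'(π-0) > h'(-π+0)`, and has a unique minimizer of
`h` over `(-π,π)`, lying in `(-π,π)`. -/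
theorem one_dim_reduction (f : ℝ → ℝ)
    (hf : ContDiffOn ℝ 2 f (Set.Icc 0 Real.pi))
    (hf0 : derivWithin f (Set.Icc 0 Real.pi) 0 = 0)
    (hfπ : derivWithin f (Set.Icc 0 Real.pi) Real.pi = 0)
    (hf'' : ∀ᵐ r ∂(MeasureTheory.volume.restrict (Set.Icc 0 Real.pi)),
      -1 < derivWithin (derivWithin f (Set.Icc 0 Real.pi)) (Set.Icc 0 Real.pi) r)
    (ζ : ℝ) (hζ : ζ ∈ Set.Icc 0 Real.pi) :
    let h : ℝ → ℝ := fun ξ => ξ ^ 2 / 2 + f (min |ξ - ζ| |ξ - ζ + 2 * Real.pi|)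
    StrictConvexOn ℝ (Set.Ioo (-Real.pi) Real.pi) h ∧
    derivWithin h (Set.Ioi (-Real.pi)) (-Real.pi) < derivWithin h (Set.Iio Real.pi) Real.pi ∧
    (∃! ξ₀, ξ₀ ∈ Set.Ioo (-Real.pi) Real.pi ∧
      ∀ ξ ∈ Set.Ioc (-Real.pi) Real.pi, h ξ₀ ≤ h ξ) := by
  intro h
  obtain ⟨hζ0, hζπ⟩ := hζ
  have hπ0 := Real.pi_pos
  have hval : ∀ ξ, h ξ = ξ ^ 2 / 2 + f (min |ξ - ζ| |ξ - ζ + 2 * Real.pi|) := fun ξ => rfl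
  clear_value h
  set f1 := derivWithin f (Set.Icc 0 Real.pi) with hf1def
  set f2 := derivWithin f1 (Set.Icc 0 Real.pi) with hf2def
  have hud : UniqueDiffOn ℝ (Icc (0:ℝ) Real.pi) := uniqueDiffOn_Icc hπ0
  have hfdiff : DifferentiableOn ℝ f (Icc 0 Real.pi) := hf.differentiableOn (by norm_num)
  have hfd : ∀ r ∈ Icc (0:ℝ) Real.pi, HasDerivWithinAt f (f1 r) (Icc 0 Real.pi) r :=
    fun r hr => (hfdiff r hr).hasDerivWithinAt
  have hc1 : ContDiffOn ℝ 1 f1 (Icc 0 Real.pi) := hf.derivWithin hud (by norm_num)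
  have hf1cont : ContinuousOn f1 (Icc 0 Real.pi) := hc1.continuousOn
  have hf1diff : DifferentiableOn ℝ f1 (Icc 0 Real.pi) := hc1.differentiableOn one_ne_zero
  have hf1d : ∀ r ∈ Icc (0:ℝ) Real.pi, HasDerivWithinAt f1 (f2 r) (Icc 0 Real.pi) r :=
    fun r hr => (hf1diff r hr).hasDerivWithinAt
  have hf2cont : ContinuousOn f2 (Icc 0 Real.pi) :=
    contDiffOn_zero.mp (hc1.derivWithin hud (by norm_num))
  have hf2ge : ∀ r ∈ Icc (0:ℝ) Real.pi, -1 ≤ f2 r := odr_ge_neg_one hf2cont hf''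
  set p := ζ - Real.pi with hpdef
  have hpπ : -Real.pi ≤ p := by rw [hpdef]; linarith
  have hpζ : p ≤ ζ := by rw [hpdef]; linarith
  set H' : ℝ → ℝ := fun ξ =>
    if ζ ≤ ξ then ξ + f1 (ξ - ζ)
    else if p ≤ ξ then ξ - f1 (ζ - ξ)
    else ξ + f1 (ξ - ζ + 2 * Real.pi) with hH'def
  -- branch descriptions of h
  have heqB : ∀ ξ ∈ Icc ζ Real.pi, h ξ = ξ ^ 2 / 2 + f (ξ - ζ) := by
    intro ξ hξ
    have h1 : |ξ - ζ| = ξ - ζ := abs_of_nonneg (by linarith [hξ.1])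
    have h2 : |ξ - ζ + 2 * Real.pi| = ξ - ζ + 2 * Real.pi :=
      abs_of_nonneg (by linarith [hξ.1])
    rw [hval ξ, h1, h2, min_eq_left (by linarith : ξ - ζ ≤ ξ - ζ + 2 * Real.pi)]
  have heqA : ∀ ξ ∈ Icc p ζ, h ξ = ξ ^ 2 / 2 + f (ζ - ξ) := by
    intro ξ hξ
    have hξ1 : p ≤ ξ := hξ.1
    have hξ2 : ξ ≤ ζ := hξ.2
    rw [hpdef] at hξ1
    have h1 : |ξ - ζ| = ζ - ξ := by rw [abs_of_nonpos (by linarith)]; ring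
    have h2 : |ξ - ζ + 2 * Real.pi| = ξ - ζ + 2 * Real.pi := abs_of_nonneg (by linarith)
    rw [hval ξ, h1, h2, min_eq_left (by linarith : ζ - ξ ≤ ξ - ζ + 2 * Real.pi)]
  have heqC : ∀ ξ ∈ Icc (-Real.pi) p, h ξ = ξ ^ 2 / 2 + f (ξ - ζ + 2 * Real.pi) := by
    intro ξ hξ
    have hξ1 : -Real.pi ≤ ξ := hξ.1
    have hξ2 : ξ ≤ p := hξ.2
    rw [hpdef] at hξ2
    have h1 : |ξ - ζ| = ζ - ξ := by rw [abs_of_nonpos (by linarith)]; ring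
    have h2 : |ξ - ζ + 2 * Real.pi| = ξ - ζ + 2 * Real.pi := abs_of_nonneg (by linarith)
    rw [hval ξ, h1, h2, min_eq_right (by linarith : ξ - ζ + 2 * Real.pi ≤ ζ - ξ)]
  -- derivatives of branch functions (within pieces)
  have hasB : ∀ ξ ∈ Icc ζ Real.pi,
      HasDerivWithinAt (fun x => x ^ 2 / 2 + f (x - ζ)) (ξ + f1 (ξ - ζ)) (Icc ζ Real.pi) ξ := by
    intro ξ hξ
    have hmap : MapsTo (fun x => x - ζ) (Icc ζ Real.pi) (Icc 0 Real.pi) := by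
      intro x hx
      simp only [mem_Icc] at hx ⊢
      constructor <;> linarith
    have hin : HasDerivWithinAt (fun x : ℝ => x - ζ) 1 (Icc ζ Real.pi) ξ :=
      (hasDerivWithinAt_id ξ _).sub_const ζ
    have hcomp := (hfd _ (hmap hξ)).comp ξ hin hmap
    simp only [Function.comp_def] at hcomp
    have hsq : HasDerivWithinAt (fun x : ℝ => x ^ 2 / 2) ξ (Icc ζ Real.pi) ξ := by
      have := ((hasDerivAt_pow 2 ξ).div_const 2).hasDerivWithinAt (s := Icc ζ Real.pi)
      exact this.congr_deriv (by norm_num)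
    have := hsq.add hcomp
    exact this.congr_deriv (by ring)
  have hasA : ∀ ξ ∈ Icc p ζ,
      HasDerivWithinAt (fun x => x ^ 2 / 2 + f (ζ - x)) (ξ - f1 (ζ - ξ)) (Icc p ζ) ξ := by
    intro ξ hξ
    have hmap : MapsTo (fun x => ζ - x) (Icc p ζ) (Icc 0 Real.pi) := by
      intro x hx
      simp only [mem_Icc, hpdef] at hx ⊢
      constructor <;> linarith
    have hin : HasDerivWithinAt (fun x : ℝ => ζ - x) (-1) (Icc p ζ) ξ :=
      (hasDerivWithinAt_id ξ _).const_sub ζ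
    have hcomp := (hfd _ (hmap hξ)).comp ξ hin hmap
    simp only [Function.comp_def] at hcomp
    have hsq : HasDerivWithinAt (fun x : ℝ => x ^ 2 / 2) ξ (Icc p ζ) ξ := by
      have := ((hasDerivAt_pow 2 ξ).div_const 2).hasDerivWithinAt (s := Icc p ζ)
      exact this.congr_deriv (by norm_num)
    have := hsq.add hcomp
    exact this.congr_deriv (by ring)
  have hasC : ∀ ξ ∈ Icc (-Real.pi) p,
      HasDerivWithinAt (fun x => x ^ 2 / 2 + f (x - ζ + 2 * Real.pi))
        (ξ + f1 (ξ - ζ + 2 * Real.pi)) (Icc (-Real.pi) p) ξ := by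
    intro ξ hξ
    have hmap : MapsTo (fun x => x - ζ + 2 * Real.pi) (Icc (-Real.pi) p) (Icc 0 Real.pi) := by
      intro x hx
      simp only [mem_Icc, hpdef] at hx ⊢
      constructor <;> linarith
    have hin : HasDerivWithinAt (fun x : ℝ => x - ζ + 2 * Real.pi) 1 (Icc (-Real.pi) p) ξ :=
      ((hasDerivWithinAt_id ξ _).sub_const ζ).add_const (2 * Real.pi)
    have hcomp := (hfd _ (hmap hξ)).comp ξ hin hmap
    simp only [Function.comp_def] at hcomp
    have hsq : HasDerivWithinAt (fun x : ℝ => x ^ 2 / 2) ξ (Icc (-Real.pi) p) ξ := by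
      have := ((hasDerivAt_pow 2 ξ).div_const 2).hasDerivWithinAt (s := Icc (-Real.pi) p)
      exact this.congr_deriv (by norm_num)
    have := hsq.add hcomp
    exact this.congr_deriv (by ring)
  -- values of H' on pieces
  have heqB' : ∀ ξ ∈ Icc ζ Real.pi, H' ξ = ξ + f1 (ξ - ζ) := by
    intro ξ hξ
    rw [hH'def]
    simp only
    rw [if_pos hξ.1]
  have heqA' : ∀ ξ ∈ Icc p ζ, H' ξ = ξ - f1 (ζ - ξ) := by
    intro ξ hξ
    rw [hH'def]
    simp only
    by_cases hc : ζ ≤ ξ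
    · have hξζ : ξ = ζ := le_antisymm hξ.2 hc
      rw [if_pos hc, hξζ]
      simp [hf0]
    · rw [if_neg hc, if_pos hξ.1]
  have heqC' : ∀ ξ ∈ Icc (-Real.pi) p, H' ξ = ξ + f1 (ξ - ζ + 2 * Real.pi) := by
    intro ξ hξ
    have hξ2 := hξ.2
    rw [hH'def]
    simp only
    have h1 : ¬ ζ ≤ ξ := by rw [hpdef] at hξ2; intro hc; linarith
    rw [if_neg h1]
    by_cases hc : p ≤ ξ
    · have hξp : ξ = p := le_antisymm hξ.2 hc
      have e1 : ζ - ξ = Real.pi := by rw [hξp, hpdef]; ring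
      have e2 : ξ - ζ + 2 * Real.pi = Real.pi := by rw [hξp, hpdef]; ring
      rw [if_pos hc, e1, e2, hfπ, sub_zero, add_zero]
    · rw [if_neg hc]
  -- master derivative
  have hIccU : (Icc (-Real.pi) p ∪ Icc p ζ) ∪ Icc ζ Real.pi = Icc (-Real.pi) Real.pi := by
    rw [Icc_union_Icc_eq_Icc hpπ hpζ, Icc_union_Icc_eq_Icc (by linarith : -Real.pi ≤ ζ) hζπ]
  have hdh : ∀ ξ ∈ Icc (-Real.pi) Real.pi,
      HasDerivWithinAt h (H' ξ) (Icc (-Real.pi) Real.pi) ξ := by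
    intro ξ _
    rw [← hIccU]
    have hpiece : ∀ (P : Set ℝ) (b : ℝ → ℝ), IsClosed P → (∀ y ∈ P, h y = b y) →
        (ξ ∈ P → HasDerivWithinAt b (H' ξ) P ξ) → HasDerivWithinAt h (H' ξ) P ξ := by
      intro P b hPc heq hder
      by_cases hmem : ξ ∈ P
      · exact (hder hmem).congr heq (heq ξ hmem)
      · rw [hasDerivWithinAt_iff_hasFDerivWithinAt]
        exact HasFDerivWithinAt.of_notMem_closure (by rwa [hPc.closure_eq])
    have hC := hpiece _ _ isClosed_Icc heqC (fun hm => by rw [heqC' ξ hm]; exact hasC ξ hm)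
    have hA := hpiece _ _ isClosed_Icc heqA (fun hm => by rw [heqA' ξ hm]; exact hasA ξ hm)
    have hB := hpiece _ _ isClosed_Icc heqB (fun hm => by rw [heqB' ξ hm]; exact hasB ξ hm)
    exact (hC.union hA).union hB
  have hdiffOn : DifferentiableOn ℝ h (Icc (-Real.pi) Real.pi) :=
    fun x hx => (hdh x hx).differentiableWithinAt
  have hcontOn : ContinuousOn h (Icc (-Real.pi) Real.pi) := hdiffOn.continuousOn
  -- full derivatives of branch derivative functions at interior points
  have hdB : ∀ x ∈ Ioo ζ Real.pi,
      HasDerivAt (fun x => x + f1 (x - ζ)) (1 + f2 (x - ζ)) x := by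
    intro x hx
    have hmem : x - ζ ∈ Icc (0:ℝ) Real.pi := ⟨by linarith [hx.1], by linarith [hx.2]⟩
    have hn : Icc (0:ℝ) Real.pi ∈ nhds (x - ζ) :=
      Icc_mem_nhds (by linarith [hx.1]) (by linarith [hx.2])
    have h1 : HasDerivAt f1 (f2 (x - ζ)) (x - ζ) := (hf1d _ hmem).hasDerivAt hn
    have h2 : HasDerivAt (fun y : ℝ => y - ζ) 1 x := (hasDerivAt_id x).sub_const ζ
    have hcomp := h1.comp x h2
    simp only [Function.comp_def] at hcomp
    have := (hasDerivAt_id x).add hcomp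
    exact this.congr_deriv (by ring)
  have hdA : ∀ x ∈ Ioo p ζ,
      HasDerivAt (fun x => x - f1 (ζ - x)) (1 + f2 (ζ - x)) x := by
    intro x hx
    have hx1 := hx.1; have hx2 := hx.2
    rw [hpdef] at hx1
    have hmem : ζ - x ∈ Icc (0:ℝ) Real.pi := ⟨by linarith, by linarith⟩
    have hn : Icc (0:ℝ) Real.pi ∈ nhds (ζ - x) :=
      Icc_mem_nhds (by linarith) (by linarith)
    have h1 : HasDerivAt f1 (f2 (ζ - x)) (ζ - x) := (hf1d _ hmem).hasDerivAt hn
    have h2 : HasDerivAt (fun y : ℝ => ζ - y) (-1) x := by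
      simpa using (hasDerivAt_id x).const_sub ζ
    have hcomp := h1.comp x h2
    simp only [Function.comp_def] at hcomp
    have := (hasDerivAt_id x).sub hcomp
    exact this.congr_deriv (by ring)
  have hdC : ∀ x ∈ Ioo (-Real.pi) p,
      HasDerivAt (fun x => x + f1 (x - ζ + 2 * Real.pi)) (1 + f2 (x - ζ + 2 * Real.pi)) x := by
    intro x hx
    have hx1 := hx.1; have hx2 := hx.2
    rw [hpdef] at hx2
    have hmem : x - ζ + 2 * Real.pi ∈ Icc (0:ℝ) Real.pi := ⟨by linarith, by linarith⟩
    have hn : Icc (0:ℝ) Real.pi ∈ nhds (x - ζ + 2 * Real.pi) :=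
      Icc_mem_nhds (by linarith) (by linarith)
    have h1 : HasDerivAt f1 (f2 (x - ζ + 2 * Real.pi)) (x - ζ + 2 * Real.pi) :=
      (hf1d _ hmem).hasDerivAt hn
    have h2 : HasDerivAt (fun y : ℝ => y - ζ + 2 * Real.pi) 1 x :=
      ((hasDerivAt_id x).sub_const ζ).add_const (2 * Real.pi)
    have hcomp := h1.comp x h2
    simp only [Function.comp_def] at hcomp
    have := (hasDerivAt_id x).add hcomp
    exact this.congr_deriv (by ring)
  -- monotonicity of H' on pieces
  have hmonB : MonotoneOn H' (Icc ζ Real.pi) := by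
    have : MonotoneOn (fun x => x + f1 (x - ζ)) (Icc ζ Real.pi) := by
      apply monotoneOn_of_deriv_nonneg (convex_Icc _ _)
      · apply ContinuousOn.add continuousOn_id
        apply hf1cont.comp (by fun_prop)
        intro x hx
        simp only [mem_Icc] at hx ⊢
        constructor <;> linarith
      · intro x hx
        rw [interior_Icc] at hx
        exact (hdB x hx).differentiableAt.differentiableWithinAt
      · intro x hx
        rw [interior_Icc] at hx
        rw [(hdB x hx).deriv]
        have := hf2ge (x - ζ) ⟨by linarith [hx.1], by linarith [hx.2]⟩
        linarith
    exact this.congr (fun ξ hξ => (heqB' ξ hξ).symm)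
  have hmonA : MonotoneOn H' (Icc p ζ) := by
    have : MonotoneOn (fun x => x - f1 (ζ - x)) (Icc p ζ) := by
      apply monotoneOn_of_deriv_nonneg (convex_Icc _ _)
      · apply ContinuousOn.sub continuousOn_id
        apply hf1cont.comp (by fun_prop)
        intro x hx
        simp only [mem_Icc, hpdef] at hx ⊢
        constructor <;> linarith
      · intro x hx
        rw [interior_Icc] at hx
        exact (hdA x hx).differentiableAt.differentiableWithinAt
      · intro x hx
        rw [interior_Icc] at hx
        have hx1 := hx.1; have hx2 := hx.2
        rw [hpdef] at hx1
        rw [(hdA x hx).deriv]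
        have := hf2ge (ζ - x) ⟨by linarith, by linarith⟩
        linarith
    exact this.congr (fun ξ hξ => (heqA' ξ hξ).symm)
  have hmonC : MonotoneOn H' (Icc (-Real.pi) p) := by
    have : MonotoneOn (fun x => x + f1 (x - ζ + 2 * Real.pi)) (Icc (-Real.pi) p) := by
      apply monotoneOn_of_deriv_nonneg (convex_Icc _ _)
      · apply ContinuousOn.add continuousOn_id
        apply hf1cont.comp (by fun_prop)
        intro x hx
        simp only [mem_Icc, hpdef] at hx ⊢
        constructor <;> linarith
      · intro x hx
        rw [interior_Icc] at hx
        exact (hdC x hx).differentiableAt.differentiableWithinAt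
      · intro x hx
        rw [interior_Icc] at hx
        have hx1 := hx.1; have hx2 := hx.2
        rw [hpdef] at hx2
        rw [(hdC x hx).deriv]
        have := hf2ge (x - ζ + 2 * Real.pi) ⟨by linarith, by linarith⟩
        linarith
    exact this.congr (fun ξ hξ => (heqC' ξ hξ).symm)
  have hmon : MonotoneOn H' (Icc (-Real.pi) Real.pi) :=
    odr_glue_mono (odr_glue_mono hmonC hmonA) hmonB
  -- strict monotonicity of H'
  have hsm : StrictMonoOn H' (Icc (-Real.pi) Real.pi) := by
    intro a ha b hb hab
    rcases lt_or_eq_of_le (hmon ha hb hab.le) with hlt | heqd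
    · exact hlt
    exfalso
    have hconst : ∀ x ∈ Icc a b, H' x = H' a := by
      intro x hx
      have hx' : x ∈ Icc (-Real.pi) Real.pi := ⟨le_trans ha.1 hx.1, le_trans hx.2 hb.2⟩
      exact le_antisymm (heqd ▸ hmon hx' hb hx.2) (hmon ha hx' hx.1)
    obtain ⟨u, v, huv, hsubab, hcase⟩ :
        ∃ u v, u < v ∧ Icc u v ⊆ Icc a b ∧
          (Icc u v ⊆ Icc ζ Real.pi ∨ Icc u v ⊆ Icc p ζ ∨ Icc u v ⊆ Icc (-Real.pi) p) := by
      rcases le_or_gt b p with hbp | hpb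
      · exact ⟨a, b, hab, subset_refl _, Or.inr (Or.inr (Icc_subset_Icc ha.1 hbp))⟩
      rcases le_or_gt ζ a with hζa | haζ
      · exact ⟨a, b, hab, subset_refl _, Or.inl (Icc_subset_Icc hζa hb.2)⟩
      rcases le_or_gt a p with hap | hpa
      · refine ⟨p, min b ζ, lt_min hpb (by rw [hpdef]; linarith),
          Icc_subset_Icc hap (min_le_left _ _),
          Or.inr (Or.inl (Icc_subset_Icc (le_refl p) (min_le_right _ _)))⟩
      · exact ⟨a, min b ζ, lt_min hab haζ,
          Icc_subset_Icc (le_refl a) (min_le_left _ _),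
          Or.inr (Or.inl (Icc_subset_Icc hpa.le (min_le_right _ _)))⟩
    rcases hcase with hB | hA | hC
    · have huB : ζ ≤ u := (hB ⟨le_refl u, huv.le⟩).1
      have hvB : v ≤ Real.pi := (hB ⟨huv.le, le_refl v⟩).2
      apply odr_affine_contra hf1d hf'' (c := H' a - ζ) (s := u - ζ) (t := v - ζ)
        (by linarith) (by linarith) (by linarith)
      intro r hr
      have hm : r + ζ ∈ Icc u v := ⟨by linarith [hr.1], by linarith [hr.2]⟩
      have h1 := hconst _ (hsubab hm)
      rw [heqB' _ (hB hm)] at h1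
      have hrr : r + ζ - ζ = r := by ring
      rw [hrr] at h1
      linarith
    · have huA : p ≤ u := (hA ⟨le_refl u, huv.le⟩).1
      have hvA : v ≤ ζ := (hA ⟨huv.le, le_refl v⟩).2
      rw [hpdef] at huA
      apply odr_affine_contra hf1d hf'' (c := ζ - H' a) (s := ζ - v) (t := ζ - u)
        (by linarith) (by linarith) (by linarith)
      intro r hr
      have hm : ζ - r ∈ Icc u v := ⟨by linarith [hr.2], by linarith [hr.1]⟩
      have h1 := hconst _ (hsubab hm)
      rw [heqA' _ (hA hm)] at h1
      have hrr : ζ - (ζ - r) = r := by ring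
      rw [hrr] at h1
      linarith
    · have huC : -Real.pi ≤ u := (hC ⟨le_refl u, huv.le⟩).1
      have hvC : v ≤ p := (hC ⟨huv.le, le_refl v⟩).2
      rw [hpdef] at hvC
      apply odr_affine_contra hf1d hf''
        (c := H' a - ζ + 2 * Real.pi) (s := u - ζ + 2 * Real.pi) (t := v - ζ + 2 * Real.pi)
        (by linarith) (by linarith) (by linarith)
      intro r hr
      have hm : r + ζ - 2 * Real.pi ∈ Icc u v := ⟨by linarith [hr.1], by linarith [hr.2]⟩
      have h1 := hconst _ (hsubab hm)
      rw [heqC' _ (hC hm)] at h1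
      have hrr : r + ζ - 2 * Real.pi - ζ + 2 * Real.pi = r := by ring
      rw [hrr] at h1
      linarith
  -- convexity
  have hdh' : ∀ x ∈ Ioo (-Real.pi) Real.pi, deriv h x = H' x := fun x hx =>
    ((hdh x (Ioo_subset_Icc_self hx)).hasDerivAt (Icc_mem_nhds hx.1 hx.2)).deriv
  have hconv : StrictConvexOn ℝ (Icc (-Real.pi) Real.pi) h := by
    apply StrictMonoOn.strictConvexOn_of_deriv (convex_Icc _ _) hcontOn
    rw [interior_Icc]
    exact (hsm.mono Ioo_subset_Icc_self).congr (fun x hx => (hdh' x hx).symm)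
  have hmπ : -Real.pi ∈ Icc (-Real.pi) Real.pi := ⟨le_refl _, by linarith⟩
  have hpπ' : Real.pi ∈ Icc (-Real.pi) Real.pi := ⟨by linarith, le_refl _⟩
  refine ⟨hconv.subset Ioo_subset_Icc_self (convex_Ioo _ _), ?_, ?_⟩
  · -- endpoint derivatives
    have e1 : derivWithin h (Ioi (-Real.pi)) (-Real.pi) = H' (-Real.pi) := by
      refine HasDerivWithinAt.derivWithin ?_ (uniqueDiffWithinAt_Ioi _)
      exact (hdh _ hmπ).mono_of_mem_nhdsWithin
        (Icc_mem_nhdsGT_of_mem ⟨le_refl _, by linarith⟩)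
    have e2 : derivWithin h (Iio Real.pi) Real.pi = H' Real.pi := by
      refine HasDerivWithinAt.derivWithin ?_ (uniqueDiffWithinAt_Iio _)
      exact (hdh _ hpπ').mono_of_mem_nhdsWithin
        (Icc_mem_nhdsLT_of_mem ⟨by linarith, le_refl _⟩)
    rw [e1, e2]
    exact hsm hmπ hpπ' (by linarith)
  · -- unique minimizer
    have hend : h (-Real.pi) = h Real.pi := by
      rw [hval, hval]
      have a1 : |(-Real.pi) - ζ| = Real.pi + ζ := by
        rw [abs_of_nonpos (by linarith)]; ring
      have a2 : |(-Real.pi) - ζ + 2 * Real.pi| = Real.pi - ζ := by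
        rw [abs_of_nonneg (by linarith)]; ring
      have a3 : |Real.pi - ζ| = Real.pi - ζ := abs_of_nonneg (by linarith)
      have a4 : |Real.pi - ζ + 2 * Real.pi| = Real.pi - ζ + 2 * Real.pi :=
        abs_of_nonneg (by linarith)
      rw [a1, a2, a3, a4, min_eq_right (by linarith : Real.pi - ζ ≤ Real.pi + ζ),
        min_eq_left (by linarith : Real.pi - ζ ≤ Real.pi - ζ + 2 * Real.pi)]
      ring_nf
    have hmid : h 0 < h Real.pi := by
      have hne : (-Real.pi) ≠ Real.pi := by intro hc; linarith [hc]
      have hs := hconv.2 hmπ hpπ' hne (by norm_num : (0:ℝ) < 1/2)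
        (by norm_num : (0:ℝ) < 1/2) (by norm_num)
      have h0' : (1/2 : ℝ) • (-Real.pi) + (1/2 : ℝ) • Real.pi = 0 := by
        rw [smul_eq_mul, smul_eq_mul]; ring
      rw [h0', hend] at hs
      simp only [smul_eq_mul] at hs
      linarith
    obtain ⟨ξ₀, hξ₀I, hξ₀min⟩ :=
      isCompact_Icc.exists_isMinOn (nonempty_Icc.2 (by linarith)) hcontOn
    rw [isMinOn_iff] at hξ₀min
    have h0I : (0:ℝ) ∈ Icc (-Real.pi) Real.pi := ⟨by linarith, by linarith⟩
    have hξ₀lt : ξ₀ ∈ Ioo (-Real.pi) Real.pi := by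
      constructor
      · rcases eq_or_lt_of_le hξ₀I.1 with he | hl
        · exfalso
          have h1 : h ξ₀ ≤ h 0 := hξ₀min 0 h0I
          rw [← he, hend] at h1
          linarith
        · exact hl
      · rcases eq_or_lt_of_le hξ₀I.2 with he | hl
        · exfalso
          have h1 : h ξ₀ ≤ h 0 := hξ₀min 0 h0I
          rw [he] at h1
          linarith
        · exact hl
    refine ⟨ξ₀, ⟨hξ₀lt, fun ξ hξ => hξ₀min ξ ⟨hξ.1.le, hξ.2⟩⟩, ?_⟩
    rintro ξ₁ ⟨hξ₁I, hξ₁min⟩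
    by_contra hne
    have e1 : h ξ₀ ≤ h ξ₁ := hξ₀min ξ₁ (Ioo_subset_Icc_self hξ₁I)
    have e2 : h ξ₁ ≤ h ξ₀ := hξ₁min ξ₀ ⟨hξ₀lt.1, hξ₀lt.2.le⟩
    have heqv : h ξ₁ = h ξ₀ := le_antisymm e2 e1
    have hmm : (1/2 : ℝ) • ξ₁ + (1/2 : ℝ) • ξ₀ ∈ Ioo (-Real.pi) Real.pi :=
      (convex_Ioo _ _) hξ₁I hξ₀lt (by norm_num) (by norm_num) (by norm_num)
    have hstrict := hconv.2 (Ioo_subset_Icc_self hξ₁I) (Ioo_subset_Icc_self hξ₀lt) hne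
      (by norm_num : (0:ℝ) < 1/2) (by norm_num : (0:ℝ) < 1/2) (by norm_num)
    rw [heqv] at hstrict
    have hge : h ξ₀ ≤ h ((1/2 : ℝ) • ξ₁ + (1/2 : ℝ) • ξ₀) :=
      hξ₀min _ (Ioo_subset_Icc_self hmm)
    simp only [smul_eq_mul] at hstrict hge
    linarith
end
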